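/- arXiv:1601.03241 — 4 statements merged into one kernel-verified Lean document; each statement's English description precedes it below -/
import Mathlib

section
/- Let G be a connected graph of order n > 3 with m edges and maximum degree Δ(G) satisfying Δ(G) < n − (2m − 3(n−1))/(n−3). Then tmc(G) = m − n + 2 + l(G). -/
open SimpleGraph

/-- A walk is a *total monochromatic path* (w.r.t. a vertex coloring `vcol` and an
edge coloring `ecol`) if it is a path and all its edges and internal vertices
share one common color. -/
def IsTMCPath {V : Type*} (G : SimpleGraph V) (vcol : V → ℕ) (ecol : Sym2 V → ℕ)
    {u v : V} (p : G.Walk u v) : Prop :=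
  p.IsPath ∧ ∃ c : ℕ, (∀ e ∈ p.edges, ecol e = c) ∧
    ∀ w ∈ p.support, w ≠ u → w ≠ v → vcol w = c

/-- A total coloring (vertex coloring `vcol` together with edge coloring `ecol`) is a
*TMC-coloring* if any two vertices are connected by a total monochromatic path. -/
def IsTMCColoring {V : Type*} (G : SimpleGraph V) (vcol : V → ℕ) (ecol : Sym2 V → ℕ) : Prop :=
  ∀ u v : V, ∃ p : G.Walk u v, IsTMCPath G vcol ecol p

/-- The number of colors used by a total coloring: colors on vertices together with
colors on (actual) edges of `G`. -/
noncomputable def totalColorsUsed {V : Type*} (G : SimpleGraph V)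
    (vcol : V → ℕ) (ecol : Sym2 V → ℕ) : ℕ :=
  (Set.range vcol ∪ ecol '' G.edgeSet).ncard

/-- The total monochromatic connection number `tmc G`: the maximum number of colors
used in a TMC-coloring of `G`. -/
noncomputable def tmc {V : Type*} (G : SimpleGraph V) : ℕ :=
  sSup { k | ∃ vcol ecol, IsTMCColoring G vcol ecol ∧ totalColorsUsed G vcol ecol = k }

/-- An edge coloring is an *MC-coloring* if any two vertices are connected by a
monochromatic path (all edges of one color). -/
def IsMCColoring {V : Type*} (G : SimpleGraph V) (ecol : Sym2 V → ℕ) : Prop :=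
  ∀ u v : V, ∃ p : G.Walk u v, p.IsPath ∧ ∃ c : ℕ, ∀ e ∈ p.edges, ecol e = c

/-- The monochromatic connection number `mc G`. -/
noncomputable def mc {V : Type*} (G : SimpleGraph V) : ℕ :=
  sSup { k | ∃ ecol : Sym2 V → ℕ, IsMCColoring G ecol ∧ (ecol '' G.edgeSet).ncard = k }

/-- A vertex coloring is an *MVC-coloring* if any two vertices are connected by a
vertex-monochromatic path (all internal vertices of one color). -/
def IsMVCColoring {V : Type*} (G : SimpleGraph V) (vcol : V → ℕ) : Prop :=
  ∀ u v : V, ∃ p : G.Walk u v, p.IsPath ∧ ∃ c : ℕ,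
    ∀ w ∈ p.support, w ≠ u → w ≠ v → vcol w = c

/-- The monochromatic vertex connection number `mvc G`. -/
noncomputable def mvc {V : Type*} (G : SimpleGraph V) : ℕ :=
  sSup { k | ∃ vcol : V → ℕ, IsMVCColoring G vcol ∧ (Set.range vcol).ncard = k }

/-- The number of leaves (vertices of degree one) of a graph. -/
noncomputable def leafCount {V : Type*} (G : SimpleGraph V) : ℕ :=
  {v : V | (G.neighborSet v).ncard = 1}.ncard

/-- `maxLeaves G = l(G)`: the maximum number of leaves over all spanning trees of `G`. -/
noncomputable def maxLeaves {V : Type*} (G : SimpleGraph V) : ℕ :=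
  sSup { k | ∃ T : SimpleGraph V, T ≤ G ∧ T.IsTree ∧ leafCount T = k }

namespace TMCAux

open Finset

open scoped Classical

set_option linter.unusedSectionVars false
set_option linter.unusedVariables false
set_option maxHeartbeats 1000000

variable {V : Type*} [Fintype V] [DecidableEq V]

noncomputable local instance (priority := low) decAdj {W : Type*} (H : SimpleGraph W) :
    DecidableRel H.Adj := Classical.decRel _


lemma connected_sdiff_of_reachable {T : SimpleGraph V} {v w : V} (hT : T.Connected)
    (hr : (T \ fromEdgeSet {s(v, w)}).Reachable v w) :
    (T \ fromEdgeSet {s(v, w)}).Connected := by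
  rw [connected_iff]
  refine ⟨fun x y => ?_, hT.nonempty⟩
  obtain ⟨p⟩ := hT.preconnected x y
  induction p with
  | nil => rfl
  | @cons a b c h q ih =>
    refine Reachable.trans ?_ ih
    by_cases he : s(a, b) = s(v, w)
    · rw [Sym2.eq_iff] at he
      rcases he with ⟨rfl, rfl⟩ | ⟨rfl, rfl⟩
      · exact hr
      · exact hr.symm
    · exact Adj.reachable (by
        rw [sdiff_adj]
        exact ⟨h, by simp [fromEdgeSet_adj, he]⟩)

lemma exists_isTree_le {H : SimpleGraph V} (h : H.Connected) : ∃ T, T ≤ H ∧ T.IsTree := by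
  have hex : ∃ k : ℕ, ∃ T : SimpleGraph V, T ≤ H ∧ T.Connected ∧ T.edgeSet.ncard = k :=
    ⟨H.edgeSet.ncard, H, le_refl _, h, rfl⟩
  classical
  obtain ⟨T, hTH, hTc, hTcard⟩ := Nat.find_spec hex
  refine ⟨T, hTH, hTc, ?_⟩
  by_contra hac
  rw [isAcyclic_iff_forall_adj_isBridge] at hac
  push_neg at hac
  obtain ⟨v, w, hadj, hnb⟩ := hac
  rw [isBridge_iff] at hnb
  push_neg at hnb
  have hr : (T \ fromEdgeSet {s(v, w)}).Reachable v w := hnb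
  have hconn' := connected_sdiff_of_reachable hTc hr
  have hle' : T \ fromEdgeSet {s(v, w)} ≤ T := sdiff_le
  have hes : (T \ fromEdgeSet {s(v, w)}).edgeSet = T.edgeSet \ {s(v, w)} := by
    rw [edgeSet_sdiff, edgeSet_fromEdgeSet, edgeSet_sdiff_sdiff_isDiag]
  have hmem : s(v, w) ∈ T.edgeSet := hadj
  have hfin : T.edgeSet.Finite := T.edgeSet.toFinite
  have hlt : (T \ fromEdgeSet {s(v, w)}).edgeSet.ncard < Nat.find hex := by
    rw [hes, Set.ncard_diff_singleton_of_mem hmem, ← hTcard]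
    have : 0 < T.edgeSet.ncard := by
      rw [Set.ncard_pos hfin]
      exact ⟨_, hmem⟩
    omega
  exact Nat.find_min hex hlt ⟨_, le_trans hle' hTH, hconn', rfl⟩

lemma connected_card_le {W : Type*} [Fintype W] (H : SimpleGraph W) (h : H.Connected) :
    Fintype.card W ≤ H.edgeSet.ncard + 1 := by
  classical
  obtain ⟨T, hTH, hT⟩ := exists_isTree_le h
  have h1 : T.edgeFinset.card + 1 = Fintype.card W := hT.card_edgeFinset
  have h2 : T.edgeSet.ncard ≤ H.edgeSet.ncard :=
    Set.ncard_le_ncard (edgeSet_mono hTH) H.edgeSet.toFinite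
  rw [← h1]
  have : T.edgeFinset.card = T.edgeSet.ncard := (Set.ncard_eq_toFinset_card' _).symm
  omega

lemma reachable_of_mem_support {H : SimpleGraph V} {x y w : V} (p : H.Walk x y)
    (hw : w ∈ p.support) : H.Reachable x w :=
  ⟨p.takeUntil w hw⟩

/-- lifting a walk to an induced subgraph -/

lemma reachable_induce_of_walk {H : SimpleGraph V} {S : Set V} {x y : V} (p : H.Walk x y)
    (hs : ∀ w ∈ p.support, w ∈ S) (hx : x ∈ S) (hy : y ∈ S) :
    (H.induce S).Reachable ⟨x, hx⟩ ⟨y, hy⟩ := by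
  induction p with
  | nil => rfl
  | @cons a b c h q ih =>
    have hb : b ∈ S := hs b (by simp)
    refine Reachable.trans (Adj.reachable ?_) (ih (fun w hw => hs w (by simp [hw])) hb hy)
    simpa using h

/-- an internal vertex of a path has two distinct neighbors -/

lemma two_neighbors_of_internal {H : SimpleGraph V} {u v w : V} (p : H.Walk u v)
    (hp : p.IsPath) (hw : w ∈ p.support) (hwu : w ≠ u) (hwv : w ≠ v) :
    ∃ a b, a ≠ b ∧ H.Adj w a ∧ H.Adj w b := by
  induction p with
  | nil => simp at hw; exact absurd hw hwu
  | @cons a b c h q ih =>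
    rw [Walk.support_cons, List.mem_cons] at hw
    rcases hw with rfl | hw
    · exact absurd rfl hwu
    · rcases eq_or_ne w b with rfl | hwb
      · -- w = b, second vertex; q : Walk b c, w ≠ c so q is not nil
        cases q with
        | nil => exact absurd rfl hwv
        | @cons b y c h' q' =>
          refine ⟨a, y, ?_, h.symm, h'⟩
          rintro rfl
          have : a ∈ (Walk.cons h' q').support := by simp
          exact (Walk.cons_isPath_iff h _ |>.mp hp).2 this
      · exact ih (Walk.cons_isPath_iff h q |>.mp hp).1 hw hwb hwv

/-- in a connected graph on ≥ 2 vertices every vertex has a neighbor -/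

lemma exists_adj_of_reachable {H : SimpleGraph V} {x y : V} (hxy : x ≠ y)
    (hr : H.Reachable x y) : ∃ z, H.Adj x z := by
  obtain ⟨p⟩ := hr
  cases p with
  | nil => exact absurd rfl hxy
  | @cons a b c h q => exact ⟨b, h⟩

/-- transfer reachability into the color graph -/

lemma reachable_transfer {H H' : SimpleGraph V} {x y : V} (p : H.Walk x y)
    (h : ∀ e ∈ p.edges, e ∈ H'.edgeSet) : H'.Reachable x y :=
  ⟨p.transfer H' h⟩

lemma tmc_ge (G : SimpleGraph V) (hn : 3 ≤ Fintype.card V)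
    (T : SimpleGraph V) (hTG : T ≤ G) (hT : T.IsTree) :
    ∃ vcol ecol, IsTMCColoring G vcol ecol ∧
      totalColorsUsed G vcol ecol
        = 1 + leafCount T + (G.edgeSet.ncard - T.edgeSet.ncard) := by
  classical
  set leaves : Finset V := univ.filter (fun v => (T.neighborSet v).ncard = 1) with hleaves
  let ι : V → ℕ := fun v => (Fintype.equivFin V v : ℕ)
  let κ : Sym2 V → ℕ := fun e => (Fintype.equivFin (Sym2 V) e : ℕ)
  have hι : Function.Injective ι := fun a b h => by
    apply (Fintype.equivFin V).injective
    exact Fin.ext h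
  have hκ : Function.Injective κ := fun a b h => by
    apply (Fintype.equivFin (Sym2 V)).injective
    exact Fin.ext h
  set f : V → ℕ := fun v => 3 * ι v + 1 with hf
  set g : Sym2 V → ℕ := fun e => 3 * κ e + 2 with hg
  set vcol : V → ℕ := fun v => if v ∈ leaves then f v else 0 with hvcol
  set ecol : Sym2 V → ℕ := fun e => if e ∈ T.edgeFinset then 0 else g e with hecol
  refine ⟨vcol, ecol, ?_, ?_⟩
  · -- TMC coloring
    intro u v
    obtain ⟨w⟩ := hT.isConnected.preconnected u v
    let p₀ : T.Path u v := w.toPath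
    have hp₀ : (p₀ : T.Walk u v).IsPath := p₀.2
    have hedges : ∀ e ∈ (p₀ : T.Walk u v).edges, e ∈ G.edgeSet := fun e he =>
      edgeSet_mono hTG ((p₀ : T.Walk u v).edges_subset_edgeSet he)
    refine ⟨(p₀ : T.Walk u v).transfer G hedges, hp₀.transfer _, 0, ?_, ?_⟩
    · intro e he
      rw [Walk.edges_transfer] at he
      have hmem : e ∈ T.edgeFinset := by
        rw [mem_edgeFinset]
        exact (p₀ : T.Walk u v).edges_subset_edgeSet he
      show (if e ∈ T.edgeFinset then 0 else g e) = 0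
      rw [if_pos hmem]
    · intro x hx hxu hxv
      rw [Walk.support_transfer] at hx
      obtain ⟨a, b, hab, ha, hb⟩ := two_neighbors_of_internal _ hp₀ hx hxu hxv
      have h2 : 1 < (T.neighborSet x).ncard := by
        rw [Set.one_lt_ncard_iff (T.neighborSet x).toFinite]
        exact ⟨a, b, ha, hb, hab⟩
      have hnl : x ∉ leaves := by
        simp only [hleaves, mem_filter, mem_univ, true_and]
        omega
      show (if x ∈ leaves then f x else 0) = 0
      rw [if_neg hnl]
  · -- color count
    have hTsubG : T.edgeFinset ⊆ G.edgeFinset := edgeFinset_mono hTG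
    set NT : Finset (Sym2 V) := G.edgeFinset \ T.edgeFinset with hNT
    have hU : Set.range vcol ∪ ecol '' G.edgeSet
        = ↑(insert 0 (leaves.image f ∪ NT.image g)) := by
      ext x
      simp only [Set.mem_union, Set.mem_range, Set.mem_image, Finset.coe_insert,
        Set.mem_insert_iff, Finset.coe_union, coe_image, Set.mem_image, Finset.mem_coe]
      constructor
      · rintro (⟨v, rfl⟩ | ⟨e, he, rfl⟩)
        · by_cases hv : v ∈ leaves
          · exact Or.inr (Or.inl ⟨v, hv, (if_pos hv).symm⟩)
          · exact Or.inl (if_neg hv)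
        · by_cases heT : e ∈ T.edgeFinset
          · exact Or.inl (if_pos heT)
          · refine Or.inr (Or.inr ⟨e, ?_, (if_neg heT).symm⟩)
            rw [hNT, Finset.mem_sdiff, mem_edgeFinset]
            exact ⟨he, heT⟩
      · have hTedge : ∃ e, e ∈ T.edgeFinset := by
          have hc := hT.card_edgeFinset
          have : 0 < T.edgeFinset.card := by omega
          obtain ⟨e, he⟩ := Finset.card_pos.mp this
          exact ⟨e, he⟩
        rintro (rfl | ⟨v, hv, rfl⟩ | ⟨e, he, rfl⟩)
        · obtain ⟨e, he⟩ := hTedge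
          exact Or.inr ⟨e, mem_edgeFinset.mp (hTsubG he), if_pos he⟩
        · exact Or.inl ⟨v, if_pos hv⟩
        · rw [hNT, Finset.mem_sdiff] at he
          exact Or.inr ⟨e, mem_edgeFinset.mp he.1, if_neg he.2⟩
    rw [totalColorsUsed, hU, Set.ncard_coe_finset]
    have hfinj : Function.Injective f := fun a b h => hι (by
      have h' : 3 * ι a + 1 = 3 * ι b + 1 := h
      omega)
    have hginj : Function.Injective g := fun a b h => hκ (by
      have h' : 3 * κ a + 2 = 3 * κ b + 2 := h
      omega)
    have h0 : (0 : ℕ) ∉ leaves.image f ∪ NT.image g := by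
      intro h
      rcases Finset.mem_union.mp h with h | h <;> obtain ⟨z, hz, hz0⟩ := Finset.mem_image.mp h
      · have : 3 * ι z + 1 = 0 := hz0
        omega
      · have : 3 * κ z + 2 = 0 := hz0
        omega
    have hdisj : Disjoint (leaves.image f) (NT.image g) := by
      rw [Finset.disjoint_left]
      rintro x hx hy
      obtain ⟨v, _, rfl⟩ := Finset.mem_image.mp hx
      obtain ⟨e, _, he⟩ := Finset.mem_image.mp hy
      have h1 : 3 * κ e + 2 = 3 * ι v + 1 := he
      omega
    rw [Finset.card_insert_of_notMem h0, Finset.card_union_of_disjoint hdisj,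
      Finset.card_image_of_injective _ hfinj,
      Finset.card_image_of_injective _ hginj]
    have hlc : leafCount T = leaves.card := by
      rw [leafCount, ← Set.ncard_coe_finset]
      congr 1
      ext v
      simp [hleaves]
    have hcs : NT.card = G.edgeSet.ncard - T.edgeSet.ncard := by
      rw [hNT, Finset.card_sdiff_of_subset hTsubG,
        Set.ncard_eq_toFinset_card' G.edgeSet, Set.ncard_eq_toFinset_card' T.edgeSet]
      congr 2 <;> ext e <;> simp
    omega

lemma snd_internal (G : SimpleGraph V) [DecidableRel G.Adj]
    (vcol : V → ℕ) (ecol : Sym2 V → ℕ) (h : IsTMCColoring G vcol ecol)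
    {u v : V} (hne : u ≠ v) (hnadj : ¬ G.Adj u v) :
    ∃ b, G.Adj u b ∧ vcol b ∈ G.edgeFinset.image ecol := by
  obtain ⟨p, hpath, c, hec, hvc⟩ := h u v
  cases p with
  | nil => exact absurd rfl hne
  | @cons a b c' hadj q =>
    have hbv : b ≠ v := by rintro rfl; exact hnadj hadj
    have hbu : b ≠ u := hadj.ne'
    have hvb : vcol b = c := hvc b (by simp) hbu hbv
    have hce : ecol s(u, b) = c := hec _ (by simp)
    refine ⟨b, hadj, ?_⟩
    rw [hvb, ← hce]
    exact mem_image_of_mem ecol (mem_edgeFinset.mpr hadj)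

lemma verts_part (G : SimpleGraph V) [DecidableRel G.Adj] (hG : G.Connected)
    (hn : 2 ≤ Fintype.card V)
    (hnc : ∃ u v : V, u ≠ v ∧ ¬ G.Adj u v)
    (vcol : V → ℕ) (ecol : Sym2 V → ℕ) (h : IsTMCColoring G vcol ecol) :
    ∃ T, T ≤ G ∧ T.IsTree ∧
      ((univ.image vcol) \ (G.edgeFinset.image ecol)).card ≤ leafCount T := by
  set A : Finset ℕ := G.edgeFinset.image ecol with hA
  set S' : Finset V := univ.filter (fun v => vcol v ∈ A) with hS'
  -- S' is nonempty
  obtain ⟨u₀, v₀, hne₀, hnadj₀⟩ := hnc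
  obtain ⟨b₀, _, hb₀⟩ := snd_internal G vcol ecol h hne₀ hnadj₀
  have hS'ne : S'.Nonempty := ⟨b₀, by simp only [hS', mem_filter, mem_univ, true_and]; exact hb₀⟩
  obtain ⟨s₀, hs₀⟩ := hS'ne
  -- pendant neighbor function
  have hν : ∀ x, x ∉ S' → ∃ y, G.Adj x y ∧ y ∈ S' := by
    intro x hx
    by_cases hex : ∃ u, u ≠ x ∧ ¬ G.Adj x u
    · obtain ⟨u, hu, hnadj⟩ := hex
      obtain ⟨b, hadj, hb⟩ := snd_internal G vcol ecol h (Ne.symm hu) hnadj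
      exact ⟨b, hadj, by simp only [hS', mem_filter, mem_univ, true_and]; exact hb⟩
    · push_neg at hex
      have hxs : x ≠ s₀ := by rintro rfl; exact hx hs₀
      exact ⟨s₀, hex s₀ (Ne.symm hxs), hs₀⟩
  set ν : V → V := fun x => if hx : x ∉ S' then Classical.choose (hν x hx) else x with hνdef
  have hνadj : ∀ x, x ∉ S' → G.Adj x (ν x) ∧ ν x ∈ S' := by
    intro x hx
    simp only [hνdef, dif_pos hx]
    exact Classical.choose_spec (hν x hx)
  -- the pendant graph
  set H2 : SimpleGraph V :=
    { Adj := fun x y => (G.Adj x y ∧ x ∈ S' ∧ y ∈ S') ∨ (x ∉ S' ∧ y = ν x) ∨ (y ∉ S' ∧ x = ν y)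
      symm := by
        constructor
        rintro x y (⟨ha, hx, hy⟩ | ⟨hx, rfl⟩ | ⟨hy, rfl⟩)
        · exact Or.inl ⟨ha.symm, hy, hx⟩
        · exact Or.inr (Or.inr ⟨hx, rfl⟩)
        · exact Or.inr (Or.inl ⟨hy, rfl⟩)
      loopless := by
        constructor
        rintro x (⟨ha, _, _⟩ | ⟨hx, heq⟩ | ⟨hx, heq⟩)
        · exact G.irrefl ha
        · exact hx (heq ▸ (hνadj x hx).2)
        · exact hx (heq ▸ (hνadj x hx).2) } with hH2
  have hH2G : H2 ≤ G := by
    rintro x y (⟨ha, _, _⟩ | ⟨hx, rfl⟩ | ⟨hy, rfl⟩)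
    · exact ha
    · exact (hνadj x hx).1
    · exact ((hνadj y hy).1).symm
  -- reachability within S'
  have hreachS : ∀ s t : V, s ∈ S' → t ∈ S' → H2.Reachable s t := by
    intro s t hs ht
    rcases eq_or_ne s t with rfl | hst
    · rfl
    · obtain ⟨p, hpath, c, hec, hvc⟩ := h s t
      have hcA : c ∈ A := by
        have hnnil : ¬ p.Nil := Walk.not_nil_of_ne hst
        cases p with
        | nil => exact absurd rfl hst
        | @cons _ b _ hadj q =>
          rw [← hec s(s, b) (by simp)]
          exact mem_image_of_mem ecol (mem_edgeFinset.mpr hadj)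
      have hsupp : ∀ w ∈ p.support, w ∈ S' := by
        intro w hw
        rcases eq_or_ne w s with rfl | hws
        · exact hs
        rcases eq_or_ne w t with rfl | hwt
        · exact ht
        · have : vcol w = c := hvc w hw hws hwt
          simp only [hS', mem_filter, mem_univ, true_and]
          rw [this]; exact hcA
      refine ⟨p.transfer H2 ?_⟩
      intro e he
      induction e using Sym2.inductionOn with
      | hf a b =>
        have hadj : G.Adj a b := p.edges_subset_edgeSet he
        have ha : a ∈ S' := hsupp a (Walk.fst_mem_support_of_mem_edges p he)
        have hb : b ∈ S' := hsupp b (Walk.snd_mem_support_of_mem_edges p he)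
        exact Or.inl ⟨hadj, ha, hb⟩
  have hH2conn : H2.Connected := by
    rw [connected_iff_exists_forall_reachable]
    refine ⟨s₀, fun x => ?_⟩
    by_cases hx : x ∈ S'
    · exact hreachS s₀ x hs₀ hx
    · have h1 : H2.Adj x (ν x) := Or.inr (Or.inl ⟨hx, rfl⟩)
      exact ((h1.reachable).trans (hreachS (ν x) s₀ (hνadj x hx).2 hs₀)).symm
  obtain ⟨T, hTH2, hT⟩ := exists_isTree_le hH2conn
  refine ⟨T, le_trans hTH2 hH2G, hT, ?_⟩
  -- every vertex outside S' is a leaf of T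
  have hleaf : ∀ x, x ∉ S' → (T.neighborSet x).ncard = 1 := by
    intro x hx
    have hsub : T.neighborSet x ⊆ {ν x} := by
      intro y hy
      rcases hTH2 hy with ⟨_, hxS, _⟩ | ⟨_, rfl⟩ | ⟨hy', rfl⟩
      · exact absurd hxS hx
      · rfl
      · exact absurd ((hνadj y hy').2) (by simpa using hx)
    have hne : (T.neighborSet x).Nonempty := by
      obtain ⟨y, hy⟩ := Fintype.exists_ne_of_one_lt_card (by omega) x
      obtain ⟨z, hz⟩ := exists_adj_of_reachable (Ne.symm hy) (hT.isConnected.preconnected x y)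
      exact ⟨z, hz⟩
    have h1 : (T.neighborSet x).ncard ≤ 1 := by
      calc (T.neighborSet x).ncard ≤ ({ν x} : Set V).ncard :=
            Set.ncard_le_ncard hsub (Set.finite_singleton _)
        _ = 1 := Set.ncard_singleton _
    have h2 : 1 ≤ (T.neighborSet x).ncard := by
      rw [Nat.one_le_iff_ne_zero, ← Nat.pos_iff_ne_zero, Set.ncard_pos (T.neighborSet x).toFinite]
      exact hne
    omega
  -- conclude
  have hsub2 : (univ.image vcol) \ A ⊆ (univ \ S').image vcol := by
    intro x hx
    rw [Finset.mem_sdiff] at hx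
    obtain ⟨v, _, rfl⟩ := Finset.mem_image.mp hx.1
    refine Finset.mem_image.mpr ⟨v, ?_, rfl⟩
    rw [Finset.mem_sdiff]
    refine ⟨mem_univ v, fun hv => hx.2 ?_⟩
    rw [hS', mem_filter] at hv
    exact hv.2
  calc ((univ.image vcol) \ A).card ≤ ((univ \ S').image vcol).card :=
        Finset.card_le_card hsub2
    _ ≤ (univ \ S').card := Finset.card_image_le
    _ ≤ leafCount T := by
        rw [leafCount, ← Set.ncard_coe_finset]
        apply Set.ncard_le_ncard _ (Set.toFinite _)
        intro x hx
        rw [Finset.coe_sdiff, Set.mem_diff] at hx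
        exact hleaf x (by simpa using hx.2)

def Hc (G : SimpleGraph V) (ecol : Sym2 V → ℕ) (c : ℕ) : SimpleGraph V where
  Adj x y := G.Adj x y ∧ ecol s(x, y) = c
  symm := ⟨fun x y ⟨h, he⟩ => ⟨h.symm, by rwa [Sym2.eq_swap]⟩⟩
  loopless := ⟨fun x ⟨h, _⟩ => G.irrefl h⟩

lemma min'_eq_min' {α : Type*} [LinearOrder α] {s t : Finset α} (h : s = t)
    (hs : s.Nonempty) (ht : t.Nonempty) : s.min' hs = t.min' ht := by subst h; rfl

lemma core (G : SimpleGraph V) [DecidableRel G.Adj] (hn : 4 ≤ Fintype.card V)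
    (hdegZ : 2 * (G.edgeSet.ncard : ℤ) + G.maxDegree * (Fintype.card V - 3)
       < (Fintype.card V : ℤ) ^ 2 - 3)
    (ecol : Sym2 V → ℕ)
    (hcov : ∀ u v : V, u ≠ v → ¬ G.Adj u v →
      ∃ c ∈ G.edgeFinset.image ecol, (Hc G ecol c).Reachable u v) :
    (G.edgeFinset.image ecol).card + Fintype.card V ≤ G.edgeSet.ncard + 2 := by
  classical
  set n := Fintype.card V with hndef
  set m' := G.edgeFinset.card with hm'
  have hmEF : G.edgeSet.ncard = m' := by
    rw [hm', ← coe_edgeFinset, Set.ncard_coe_finset]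
  set A := G.edgeFinset.image ecol with hAdef
  by_contra hcon
  push_neg at hcon
  rw [hmEF] at hcon
  -- hcon : m' + 2 < A.card + n
  letI : LinearOrder V := LinearOrder.lift' (fun v => Fintype.equivFin V v)
    (Fintype.equivFin V).injective
  -- components
  set cmp : ℕ → V → Finset V :=
    fun c v => univ.filter (fun u => (Hc G ecol c).Reachable v u) with hcmp
  have hmem_cmp : ∀ c v u, u ∈ cmp c v ↔ (Hc G ecol c).Reachable v u := by
    intro c v u; simp [hcmp]
  have hself : ∀ c v, v ∈ cmp c v := fun c v => (hmem_cmp c v v).mpr (Reachable.refl v)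
  have hcmp_eq : ∀ c v u, (Hc G ecol c).Reachable v u → cmp c u = cmp c v := by
    intro c v u h
    ext w
    rw [hmem_cmp, hmem_cmp]
    exact ⟨fun h2 => h.trans h2, fun h2 => h.symm.trans h2⟩
  set a : ℕ → V → ℕ := fun c v => (cmp c v).card with ha
  have han : ∀ c v, a c v ≤ n := fun c v => by
    rw [ha, hndef, ← Finset.card_univ]
    exact Finset.card_le_card (subset_univ _)
  have ha1 : ∀ c v, 1 ≤ a c v := fun c v => Finset.card_pos.mpr ⟨v, hself c v⟩
  set rep : ℕ → V → V := fun c v => (cmp c v).min' ⟨v, hself c v⟩ with hrep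
  have hrep_mem : ∀ c v, rep c v ∈ cmp c v := fun c v => Finset.min'_mem _ _
  have hrep_reach : ∀ c v, (Hc G ecol c).Reachable v (rep c v) :=
    fun c v => (hmem_cmp c v _).mp (hrep_mem c v)
  have hcmp_rep : ∀ c v, cmp c (rep c v) = cmp c v :=
    fun c v => hcmp_eq c v _ (hrep_reach c v)
  have ha_rep : ∀ c v, a c (rep c v) = a c v := fun c v => by
    rw [ha]
    simp only []
    rw [hcmp_rep]
  have hrep_eq : ∀ c v u, u ∈ cmp c v → rep c u = rep c v := by
    intro c v u hu
    have hcc : cmp c u = cmp c v := hcmp_eq c v u ((hmem_cmp c v u).mp hu)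
    exact min'_eq_min' hcc _ _
  have hrep_fix : ∀ c v, rep c (rep c v) = rep c v := fun c v => hrep_eq c v _ (hrep_mem c v)
  set Reps : ℕ → Finset V := fun c => univ.image (rep c) with hReps
  have hrepReps : ∀ c v, rep c v ∈ Reps c := fun c v => mem_image_of_mem _ (mem_univ v)
  have hReps_fix : ∀ c r, r ∈ Reps c → rep c r = r := by
    intro c r hr
    obtain ⟨w, _, rfl⟩ := Finset.mem_image.mp hr
    exact hrep_fix c w
  have hfiber : ∀ c r, r ∈ Reps c → ∀ v, rep c v = r ↔ v ∈ cmp c r := by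
    intro c r hr v
    constructor
    · intro h
      rw [← h]
      exact (hmem_cmp c (rep c v) v).mpr (hrep_reach c v).symm
    · intro hv
      rw [hrep_eq c r v hv, hReps_fix c r hr]
  -- restricted color graphs
  set HcK : ℕ → V → SimpleGraph V := fun c r =>
    { Adj := fun x y => (Hc G ecol c).Adj x y ∧ rep c x = r
      symm := by
        constructor
        rintro x y ⟨hxy, hx⟩
        refine ⟨hxy.symm, ?_⟩
        rw [hrep_eq c x y ((hmem_cmp c x y).mpr hxy.reachable)]
        exact hx
      loopless := ⟨fun x ⟨hxx, _⟩ => (Hc G ecol c).irrefl hxx⟩ } with hHcK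
  have hHcKadj : ∀ c r x y, (HcK c r).Adj x y ↔ ((Hc G ecol c).Adj x y ∧ rep c x = r) :=
    fun c r x y => Iff.rfl
  set ek : ℕ → V → ℕ := fun c r => (HcK c r).edgeFinset.card with hek
  set kc : ℕ → ℕ := fun c => (Hc G ecol c).edgeFinset.card with hkc
  have hkfil : ∀ c, (Hc G ecol c).edgeFinset = G.edgeFinset.filter (fun e => ecol e = c) := by
    intro c
    ext e
    induction e using Sym2.inductionOn with
    | hf x y =>
      simp only [mem_edgeFinset, Finset.mem_filter, mem_edgeSet]
      exact ⟨fun ⟨h1, h2⟩ => ⟨h1, h2⟩, fun ⟨h1, h2⟩ => ⟨h1, h2⟩⟩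
  have hsum_k : ∑ c ∈ A, kc c = m' := by
    have h := Finset.card_eq_sum_card_fiberwise
      (f := ecol) (s := G.edgeFinset) (t := A) (fun e he => mem_image_of_mem ecol he)
    rw [hm', h]
    refine Finset.sum_congr rfl (fun c hc => ?_)
    rw [hkc]
    simp only []
    rw [hkfil]
  have hk1 : ∀ c ∈ A, 1 ≤ kc c := by
    intro c hc
    obtain ⟨e, he, rfl⟩ := Finset.mem_image.mp hc
    rw [hkc]
    simp only []
    rw [hkfil]
    exact Finset.card_pos.mpr ⟨e, Finset.mem_filter.mpr ⟨he, rfl⟩⟩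
  -- degrees of restricted graphs
  have hdegHcK : ∀ c r v, (HcK c r).degree v
      = if rep c v = r then (Hc G ecol c).degree v else 0 := by
    intro c r v
    split_ifs with h
    · have hnb : (HcK c r).neighborFinset v = (Hc G ecol c).neighborFinset v := by
        ext w
        simp only [mem_neighborFinset]
        exact (iff_of_eq (congrArg _ rfl)).trans
          ⟨fun hh => ((hHcKadj c r v w).mp hh).1, fun hh => (hHcKadj c r v w).mpr ⟨hh, h⟩⟩
      unfold SimpleGraph.degree
      rw [hnb]
    · have hnb : (HcK c r).neighborFinset v = ∅ := by
        ext w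
        simp only [mem_neighborFinset, Finset.notMem_empty, iff_false]
        intro hh
        exact h ((hHcKadj c r v w).mp hh).2
      unfold SimpleGraph.degree
      rw [hnb, Finset.card_empty]
  have hsum_deg_cmp : ∀ c r, r ∈ Reps c →
      ∑ v ∈ cmp c r, (Hc G ecol c).degree v = 2 * ek c r := by
    intro c r hr
    have h1 := SimpleGraph.sum_degrees_eq_twice_card_edges (HcK c r)
    have h2 : ∀ v : V, (HcK c r).degree v
        = if v ∈ cmp c r then (Hc G ecol c).degree v else 0 := by
      intro v
      by_cases hv : v ∈ cmp c r
      · rw [if_pos hv, hdegHcK, if_pos ((hfiber c r hr v).mpr hv)]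
      · rw [if_neg hv, hdegHcK, if_neg (fun h => hv ((hfiber c r hr v).mp h))]
    calc ∑ v ∈ cmp c r, (Hc G ecol c).degree v
        = ∑ v ∈ univ ∩ cmp c r, (Hc G ecol c).degree v := by rw [Finset.univ_inter]
      _ = ∑ v : V, if v ∈ cmp c r then (Hc G ecol c).degree v else 0 :=
          (Finset.sum_ite_mem univ (cmp c r) _).symm
      _ = ∑ v : V, (HcK c r).degree v := by
          exact Finset.sum_congr rfl (fun v _ => (h2 v).symm)
      _ = 2 * ek c r := h1
  have hsum_ek : ∀ c, ∑ r ∈ Reps c, ek c r = kc c := by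
    intro c
    have hh : 2 * ∑ r ∈ Reps c, ek c r = 2 * kc c := by
      calc 2 * ∑ r ∈ Reps c, ek c r = ∑ r ∈ Reps c, 2 * ek c r := Finset.mul_sum _ _ _
        _ = ∑ r ∈ Reps c, ∑ v : V, (HcK c r).degree v :=
            Finset.sum_congr rfl (fun r _ =>
              (SimpleGraph.sum_degrees_eq_twice_card_edges (HcK c r)).symm)
        _ = ∑ v : V, ∑ r ∈ Reps c, (HcK c r).degree v := Finset.sum_comm
        _ = ∑ v : V, (Hc G ecol c).degree v := by
            refine Finset.sum_congr rfl (fun v _ => ?_)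
            rw [Finset.sum_congr rfl (fun r _ => hdegHcK c r v)]
            rw [Finset.sum_ite_eq (Reps c) (rep c v) (fun _ => (Hc G ecol c).degree v)]
            rw [if_pos (hrepReps c v)]
        _ = 2 * kc c := SimpleGraph.sum_degrees_eq_twice_card_edges _
    omega
  -- rank bound : a ≤ ek + 1 on representatives
  have hrank : ∀ c r, r ∈ Reps c → a c r ≤ ek c r + 1 := by
    intro c r hr
    have hconn : ((Hc G ecol c).induce ↑(cmp c r)).Connected := by
      rw [connected_iff]
      constructor
      · rintro ⟨x, hx⟩ ⟨y, hy⟩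
        have hx' : x ∈ cmp c r := by exact_mod_cast hx
        have hy' : y ∈ cmp c r := by exact_mod_cast hy
        have hrx : (Hc G ecol c).Reachable r x := (hmem_cmp c r x).mp hx'
        have hry : (Hc G ecol c).Reachable r y := (hmem_cmp c r y).mp hy'
        obtain ⟨p⟩ := hrx.symm.trans hry
        exact reachable_induce_of_walk p (fun w hw => by
          have hxw : (Hc G ecol c).Reachable x w := reachable_of_mem_support p hw
          have : w ∈ cmp c r := (hmem_cmp c r w).mpr (hrx.trans hxw)
          exact_mod_cast this) _ _
      · exact ⟨⟨r, by exact_mod_cast hself c r⟩⟩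
    have hcard := connected_card_le ((Hc G ecol c).induce ↑(cmp c r)) hconn
    have hcards : Fintype.card ↥((cmp c r : Set V)) = a c r := by
      rw [← Nat.card_eq_fintype_card, Nat.card_coe_set_eq, Set.ncard_coe_finset]
    rw [hcards] at hcard
    have hedge : ((Hc G ecol c).induce ↑(cmp c r)).edgeSet.ncard ≤ ek c r := by
      rw [← coe_edgeFinset, Set.ncard_coe_finset, hek]
      simp only []
      apply Finset.card_le_card_of_injOn (Sym2.map Subtype.val)
      · intro e he
        induction e using Sym2.inductionOn with
        | hf x y =>
          rw [Finset.mem_coe, mem_edgeFinset, mem_edgeSet] at he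
          have hadj : (Hc G ecol c).Adj ↑x ↑y := he
          rw [Sym2.map_pair_eq, Finset.mem_coe, mem_edgeFinset, mem_edgeSet, hHcKadj]
          refine ⟨hadj, ?_⟩
          have hx' : (x : V) ∈ cmp c r := by exact_mod_cast x.2
          exact (hfiber c r hr ↑x).mpr hx'
      · exact (Sym2.map.injective Subtype.val_injective).injOn
    omega
  -- non-neighbours and reachable non-neighbours
  set F : ℕ → V → Finset V := fun c v =>
    univ.filter (fun u => u ≠ v ∧ ¬ G.Adj v u ∧ (Hc G ecol c).Reachable v u) with hF
  have hmem_F : ∀ c v u, u ∈ F c v ↔ (u ≠ v ∧ ¬ G.Adj v u ∧ (Hc G ecol c).Reachable v u) := by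
    intro c v u; simp [hF]
  set NN : V → Finset V := fun v => univ.filter (fun u => u ≠ v ∧ ¬ G.Adj v u) with hNN
  have hmem_NN : ∀ v u, u ∈ NN v ↔ (u ≠ v ∧ ¬ G.Adj v u) := by
    intro v u; simp [hNN]
  have hNNcard : ∀ v, (NN v).card + 1 + G.degree v = n := by
    intro v
    have hpart := Finset.card_filter_add_card_filter_not
      (s := (univ : Finset V)) (p := fun u => u = v ∨ G.Adj v u)
    have h1 : univ.filter (fun u => u = v ∨ G.Adj v u) = insert v (G.neighborFinset v) := by
      ext u
      simp [mem_neighborFinset, adj_comm]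
    have h2 : univ.filter (fun u => ¬(u = v ∨ G.Adj v u)) = NN v := by
      ext u
      rw [hmem_NN]
      simp
    have h3 : (insert v (G.neighborFinset v)).card = 1 + G.degree v := by
      rw [Finset.card_insert_of_notMem (fun hv => G.irrefl (v := v) (by simpa using hv))]
      rw [SimpleGraph.card_neighborFinset_eq_degree]
      omega
    rw [h1, h2, h3, Finset.card_univ, ← hndef] at hpart
    omega
  have hNNsub : ∀ v, NN v ⊆ A.biUnion (fun c => F c v) := by
    intro v u hu
    rw [hmem_NN] at hu
    obtain ⟨c, hcA, hreach⟩ := hcov v u (Ne.symm hu.1) hu.2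
    exact Finset.mem_biUnion.mpr ⟨c, hcA, (hmem_F c v u).mpr ⟨hu.1, hu.2, hreach⟩⟩
  have hFbound : ∀ c v, (F c v).card + 1 + (Hc G ecol c).degree v ≤ a c v := by
    intro c v
    have hsub : F c v ∪ insert v ((Hc G ecol c).neighborFinset v) ⊆ cmp c v := by
      intro u hu
      rcases Finset.mem_union.mp hu with hu | hu
      · exact (hmem_cmp c v u).mpr ((hmem_F c v u).mp hu).2.2
      · rcases Finset.mem_insert.mp hu with h | hu
        · rw [h]; exact hself c v
        · refine (hmem_cmp c v u).mpr (Adj.reachable ?_)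
          simpa using hu
    have hdisj : Disjoint (F c v) (insert v ((Hc G ecol c).neighborFinset v)) := by
      rw [Finset.disjoint_left]
      intro u hu hu2
      have hu' := (hmem_F c v u).mp hu
      rcases Finset.mem_insert.mp hu2 with h | hu2
      · exact hu'.1 h
      · have hadj : (Hc G ecol c).Adj v u := by simpa using hu2
        exact hu'.2.1 hadj.1
    have hcardu : (F c v ∪ insert v ((Hc G ecol c).neighborFinset v)).card
        = (F c v).card + 1 + (Hc G ecol c).degree v := by
      rw [Finset.card_union_of_disjoint hdisj,
        Finset.card_insert_of_notMem
          (fun hv => (Hc G ecol c).irrefl (v := v) (by simpa using hv)),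
        SimpleGraph.card_neighborFinset_eq_degree]
      omega
    rw [← hcardu]
    exact Finset.card_le_card hsub
  have hFsmall : ∀ c v, a c v ≤ 2 → F c v = ∅ := by
    intro c v hav
    rw [Finset.eq_empty_iff_forall_notMem]
    intro u hu
    obtain ⟨hu1, hu2, hu3⟩ := (hmem_F c v u).mp hu
    obtain ⟨z, hz⟩ := exists_adj_of_reachable (Ne.symm hu1) hu3
    have hzc : z ∈ cmp c v := (hmem_cmp c v z).mpr hz.reachable
    have huc : u ∈ cmp c v := (hmem_cmp c v u).mpr hu3
    have hzv : z ≠ v := hz.ne'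
    have hzu : z = u := by
      by_contra hne
      have h3 : ({v, z, u} : Finset V) ⊆ cmp c v := by
        intro w hw
        simp only [Finset.mem_insert, Finset.mem_singleton] at hw
        rcases hw with h | h | h
        · rw [h]; exact hself c v
        · rw [h]; exact hzc
        · rw [h]; exact huc
      have hc3 : ({v, z, u} : Finset V).card = 3 := by
        rw [Finset.card_insert_of_notMem (by simp [Ne.symm hzv, Ne.symm hu1]),
          Finset.card_insert_of_notMem (by simp [hne]), Finset.card_singleton]
      have h9 := Finset.card_le_card h3
      rw [hc3] at h9
      have h10 : 3 ≤ a c v := h9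
      omega
    subst hzu
    exact hu2 hz.1
  -- the waste budget
  set b : ℕ → V → ℤ := fun c r => max ((a c r : ℤ) - 2) 0 with hb
  have hb_nonneg : ∀ c r, 0 ≤ b c r := fun c r => le_max_right _ _
  have hbud : ∀ c ∈ A, ∑ r ∈ Reps c, b c r ≤ (kc c : ℤ) - 1 := by
    intro c hc
    have hbsplit : ∑ r ∈ Reps c, b c r
        = ∑ r ∈ (Reps c).filter (fun r => 3 ≤ a c r), ((a c r : ℤ) - 2) := by
      rw [← Finset.sum_filter_add_sum_filter_not (Reps c) (fun r => 3 ≤ a c r) (b c)]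
      have hz : ∑ r ∈ (Reps c).filter (fun r => ¬ 3 ≤ a c r), b c r = 0 := by
        refine Finset.sum_eq_zero (fun r hr => ?_)
        have h3 := (Finset.mem_filter.mp hr).2
        rw [hb]
        simp only []
        rw [max_eq_right]
        have : (a c r : ℤ) ≤ 2 := by exact_mod_cast (by omega : a c r ≤ 2)
        omega
      have hp : ∑ r ∈ (Reps c).filter (fun r => 3 ≤ a c r), b c r
          = ∑ r ∈ (Reps c).filter (fun r => 3 ≤ a c r), ((a c r : ℤ) - 2) := by
        refine Finset.sum_congr rfl (fun r hr => ?_)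
        have h3 := (Finset.mem_filter.mp hr).2
        rw [hb]
        simp only []
        rw [max_eq_left]
        have : (3 : ℤ) ≤ (a c r : ℤ) := by exact_mod_cast h3
        omega
      rw [hz, hp, add_zero]
    rw [hbsplit]
    by_cases hNTe : ((Reps c).filter (fun r => 3 ≤ a c r)).Nonempty
    · have hstep : ∑ r ∈ (Reps c).filter (fun r => 3 ≤ a c r), ((a c r : ℤ) - 2)
          ≤ ∑ r ∈ (Reps c).filter (fun r => 3 ≤ a c r), ((ek c r : ℤ) - 1) := by
        refine Finset.sum_le_sum (fun r hr => ?_)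
        have hrR := Finset.mem_filter.mp hr
        have := hrank c r hrR.1
        have h4 : (a c r : ℤ) ≤ (ek c r : ℤ) + 1 := by exact_mod_cast this
        omega
      have hstep2 : ∑ r ∈ (Reps c).filter (fun r => 3 ≤ a c r), ((ek c r : ℤ) - 1)
          = (∑ r ∈ (Reps c).filter (fun r => 3 ≤ a c r), (ek c r : ℤ))
            - ((Reps c).filter (fun r => 3 ≤ a c r)).card := by
        rw [Finset.sum_sub_distrib, Finset.sum_const, nsmul_eq_mul, mul_one]
      have hstep3 : ∑ r ∈ (Reps c).filter (fun r => 3 ≤ a c r), (ek c r : ℤ)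
          ≤ (kc c : ℤ) := by
        have h5 : ∑ r ∈ (Reps c).filter (fun r => 3 ≤ a c r), (ek c r : ℤ)
            ≤ ∑ r ∈ Reps c, (ek c r : ℤ) :=
          Finset.sum_le_sum_of_subset_of_nonneg (Finset.filter_subset _ _)
            (fun r _ _ => by positivity)
        have h6 : ∑ r ∈ Reps c, (ek c r : ℤ) = (kc c : ℤ) := by
          exact_mod_cast congrArg (Nat.cast : ℕ → ℤ) (hsum_ek c)
        omega
      have hcard1 : (1 : ℤ) ≤ ((Reps c).filter (fun r => 3 ≤ a c r)).card := by
        exact_mod_cast Finset.card_pos.mpr hNTe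
      omega
    · rw [Finset.not_nonempty_iff_eq_empty.mp hNTe, Finset.sum_empty]
      have := hk1 c hc
      have : (1 : ℤ) ≤ (kc c : ℤ) := by exact_mod_cast this
      omega
  have hB : ∑ c ∈ A, ∑ r ∈ Reps c, b c r ≤ (n : ℤ) - 3 := by
    have h1 : ∑ c ∈ A, ∑ r ∈ Reps c, b c r ≤ ∑ c ∈ A, ((kc c : ℤ) - 1) :=
      Finset.sum_le_sum hbud
    have h2 : ∑ c ∈ A, ((kc c : ℤ) - 1) = (m' : ℤ) - A.card := by
      rw [Finset.sum_sub_distrib, Finset.sum_const, nsmul_eq_mul, mul_one]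
      have : ∑ c ∈ A, (kc c : ℤ) = (m' : ℤ) := by
        exact_mod_cast congrArg (Nat.cast : ℕ → ℤ) hsum_k
      omega
    have h3 : (m' : ℤ) + 3 ≤ (A.card : ℤ) + n := by exact_mod_cast hcon
    omega
  -- case split on existence of a nontrivial component
  by_cases hbig : ∃ c ∈ A, ∃ v, 3 ≤ a c v
  · -- pick the maximum component size M
    set D : Finset ℕ := (Finset.range (n + 1)).filter
      (fun t => 3 ≤ t ∧ ∃ c ∈ A, ∃ v, a c v = t) with hD
    have hDne : D.Nonempty := by
      obtain ⟨c, hc, v, hv⟩ := hbig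
      exact ⟨a c v, Finset.mem_filter.mpr
        ⟨Finset.mem_range.mpr (by have := han c v; omega), hv, c, hc, v, rfl⟩⟩
    set M := D.max' hDne with hM
    obtain ⟨hM3, c₀, hc₀A, v₀, hv₀⟩ := (Finset.mem_filter.mp (D.max'_mem hDne)).2
    have hMmax : ∀ c ∈ A, ∀ v, 3 ≤ a c v → a c v ≤ M := by
      intro c hc v h3
      refine Finset.le_max' D _ (Finset.mem_filter.mpr
        ⟨Finset.mem_range.mpr (by have := han c v; omega), h3, c, hc, v, rfl⟩)
    set r₀ := rep c₀ v₀ with hr₀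
    have hr₀Reps : r₀ ∈ Reps c₀ := hrepReps c₀ v₀
    have har₀ : a c₀ r₀ = M := by rw [hr₀, ha_rep, hv₀]
    have hbr₀ : b c₀ r₀ = (M : ℤ) - 2 := by
      rw [hb]
      simp only []
      rw [har₀, max_eq_left]
      have : (3 : ℤ) ≤ (M : ℤ) := by exact_mod_cast hM3
      omega
    -- M ≤ n - 1
    have hMn : (M : ℤ) - 2 ≤ (n : ℤ) - 3 := by
      have h1 : b c₀ r₀ ≤ ∑ r ∈ Reps c₀, b c₀ r :=
        Finset.single_le_sum (fun r _ => hb_nonneg c₀ r) hr₀Reps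
      have h2 : ∑ r ∈ Reps c₀, b c₀ r ≤ ∑ c ∈ A, ∑ r ∈ Reps c, b c r :=
        Finset.single_le_sum (f := fun c => ∑ r ∈ Reps c, b c r)
          (fun c _ => Finset.sum_nonneg (fun r _ => hb_nonneg c r)) hc₀A
      rw [hbr₀] at h1
      omega
    -- a vertex outside the biggest component
    have hout : ∃ v₁, v₁ ∉ cmp c₀ r₀ := by
      by_contra hall
      push_neg at hall
      have hs : (univ : Finset V) ⊆ cmp c₀ r₀ := fun v _ => hall v
      have hcard := Finset.card_le_card hs
      rw [Finset.card_univ, ← hndef] at hcard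
      have h9 : n ≤ M := by rw [← har₀]; exact hcard
      have h10 : (n : ℤ) ≤ (M : ℤ) := by exact_mod_cast h9
      omega
    obtain ⟨v₁, hv₁⟩ := hout
    -- pointwise bound via b
    have hpointF : ∀ c ∈ A, ∀ v, ((F c v).card : ℤ) ≤ b c (rep c v) := by
      intro c hc v
      by_cases hsm : a c v ≤ 2
      · rw [hFsmall c v hsm, Finset.card_empty]
        exact_mod_cast hb_nonneg c (rep c v)
      · push_neg at hsm
        have hdeg1 : 1 ≤ (Hc G ecol c).degree v := by
          have h2 : ∃ u ∈ cmp c v, u ≠ v := by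
            have : 1 < (cmp c v).card := by
              have hx : (cmp c v).card = a c v := rfl
              omega
            obtain ⟨u, hu, hune⟩ := Finset.exists_mem_ne this v
            exact ⟨u, hu, hune⟩
          obtain ⟨u, hu, hune⟩ := h2
          obtain ⟨z, hz⟩ := exists_adj_of_reachable (Ne.symm hune) ((hmem_cmp c v u).mp hu)
          rw [← SimpleGraph.card_neighborFinset_eq_degree]
          exact Finset.card_pos.mpr ⟨z, by simpa using hz⟩
        have h5 := hFbound c v
        have h6 : b c (rep c v) = (a c v : ℤ) - 2 := by
          rw [hb]
          simp only []
          rw [ha_rep, max_eq_left]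
          have : (3 : ℤ) ≤ (a c v : ℤ) := by exact_mod_cast hsm
          omega
        rw [h6]
        have : (F c v).card + 1 + 1 ≤ a c v := by omega
        push_cast
        omega
    -- the vertex outside the biggest component has large degree
    have hDeltaM : (M : ℤ) ≤ G.maxDegree := by
      have h1 : ((NN v₁).card : ℤ) ≤ ∑ c ∈ A, ((F c v₁).card : ℤ) := by
        have hcb := Finset.card_le_card (hNNsub v₁)
        have hbb := Finset.card_biUnion_le (s := A) (t := fun c => F c v₁)
        have := le_trans hcb hbb
        calc ((NN v₁).card : ℤ) ≤ ((∑ c ∈ A, (F c v₁).card : ℕ) : ℤ) := by exact_mod_cast this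
          _ = ∑ c ∈ A, ((F c v₁).card : ℤ) := by push_cast; ring
      have h2 : ∑ c ∈ A, ((F c v₁).card : ℤ) + ((M : ℤ) - 2)
          ≤ ∑ c ∈ A, ∑ r ∈ Reps c, b c r := by
        have hsplitA : ∀ S : ℕ → ℤ, ∑ c ∈ A, S c = S c₀ + ∑ c ∈ A.erase c₀, S c :=
          fun S => (Finset.add_sum_erase A S hc₀A).symm
        rw [hsplitA (fun c => ((F c v₁).card : ℤ)),
          hsplitA (fun c => ∑ r ∈ Reps c, b c r)]
        have hterm : ∀ c ∈ A.erase c₀, ((F c v₁).card : ℤ) ≤ ∑ r ∈ Reps c, b c r := by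
          intro c hc
          refine le_trans (hpointF c (Finset.mem_of_mem_erase hc) v₁) ?_
          exact Finset.single_le_sum (fun r _ => hb_nonneg c r) (hrepReps c v₁)
        have hc₀term : ((F c₀ v₁).card : ℤ) + ((M : ℤ) - 2) ≤ ∑ r ∈ Reps c₀, b c₀ r := by
          have hne : rep c₀ v₁ ≠ r₀ := by
            intro heq
            apply hv₁
            have : v₁ ∈ cmp c₀ (rep c₀ v₁) :=
              (hmem_cmp c₀ (rep c₀ v₁) v₁).mpr (hrep_reach c₀ v₁).symm
            rwa [heq] at this
          have hpair : ({rep c₀ v₁, r₀} : Finset V) ⊆ Reps c₀ := by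
            intro r hr
            rcases Finset.mem_insert.mp hr with rfl | hr
            · exact hrepReps c₀ v₁
            · rw [Finset.mem_singleton.mp hr]
              exact hr₀Reps
          have hps : ∑ r ∈ ({rep c₀ v₁, r₀} : Finset V), b c₀ r ≤ ∑ r ∈ Reps c₀, b c₀ r :=
            Finset.sum_le_sum_of_subset_of_nonneg hpair (fun r _ _ => hb_nonneg c₀ r)
          rw [Finset.sum_insert (by simp [hne]), Finset.sum_singleton, hbr₀] at hps
          have := hpointF c₀ hc₀A v₁
          omega
        have := Finset.sum_le_sum hterm
        omega
      have h3 : ((NN v₁).card : ℤ) ≤ ((n : ℤ) - 3) - ((M : ℤ) - 2) := by omega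
      have h4 : ((NN v₁).card : ℤ) + 1 + G.degree v₁ = n := by exact_mod_cast hNNcard v₁
      have h5 : (G.degree v₁ : ℤ) ≤ G.maxDegree := by
        exact_mod_cast G.degree_le_maxDegree v₁
      omega
    -- global count
    have hglobal : (n : ℤ) * ((n : ℤ) - 1) - 2 * m'
        ≤ ((M : ℤ) - 1) * ∑ c ∈ A, ∑ r ∈ Reps c, b c r := by
      have h1 : ∑ v : V, ((NN v).card : ℤ) = (n : ℤ) * ((n : ℤ) - 1) - 2 * m' := by
        have hh := SimpleGraph.sum_degrees_eq_twice_card_edges G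
        have hdegs : ∑ v : V, (G.degree v : ℤ) = 2 * m' := by
          exact_mod_cast congrArg (Nat.cast : ℕ → ℤ) hh
        have heach : ∀ v : V, ((NN v).card : ℤ) = (n : ℤ) - 1 - G.degree v := by
          intro v
          have := hNNcard v
          push_cast
          omega
        calc ∑ v : V, ((NN v).card : ℤ) = ∑ v : V, ((n : ℤ) - 1 - G.degree v) :=
              Finset.sum_congr rfl (fun v _ => heach v)
          _ = (Fintype.card V) • ((n : ℤ) - 1) - ∑ v : V, (G.degree v : ℤ) := by
              rw [Finset.sum_sub_distrib, Finset.sum_const, Finset.card_univ]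
          _ = (n : ℤ) * ((n : ℤ) - 1) - 2 * m' := by
              rw [hdegs, ← hndef, nsmul_eq_mul]
      have h2 : ∑ v : V, ((NN v).card : ℤ) ≤ ∑ c ∈ A, ∑ v : V, ((F c v).card : ℤ) := by
        have h2a : ∀ v : V, ((NN v).card : ℤ) ≤ ∑ c ∈ A, ((F c v).card : ℤ) := by
          intro v
          have hcb := Finset.card_le_card (hNNsub v)
          have hbb := Finset.card_biUnion_le (s := A) (t := fun c => F c v)
          have := le_trans hcb hbb
          calc ((NN v).card : ℤ) ≤ ((∑ c ∈ A, (F c v).card : ℕ) : ℤ) := by exact_mod_cast this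
            _ = ∑ c ∈ A, ((F c v).card : ℤ) := by push_cast; ring
        calc ∑ v : V, ((NN v).card : ℤ) ≤ ∑ v : V, ∑ c ∈ A, ((F c v).card : ℤ) :=
              Finset.sum_le_sum (fun v _ => h2a v)
          _ = ∑ c ∈ A, ∑ v : V, ((F c v).card : ℤ) := Finset.sum_comm
      have h3 : ∀ c ∈ A, ∑ v : V, ((F c v).card : ℤ)
          ≤ ∑ r ∈ Reps c, (((a c r : ℤ)) * ((a c r : ℤ) - 1) - 2 * ek c r) := by
        intro c hc
        have hf := Finset.sum_fiberwise_of_maps_to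
          (g := rep c) (s := (univ : Finset V)) (t := Reps c)
          (fun v _ => hrepReps c v) (fun v => ((F c v).card : ℤ))
        rw [← hf]
        refine Finset.sum_le_sum (fun r hr => ?_)
        have hfeq : univ.filter (fun v => rep c v = r) = cmp c r := by
          ext v
          rw [Finset.mem_filter]
          constructor
          · rintro ⟨-, h⟩
            exact (hfiber c r hr v).mp h
          · intro h
            exact ⟨mem_univ v, (hfiber c r hr v).mpr h⟩
        rw [hfeq]
        have hpt : ∀ v ∈ cmp c r, ((F c v).card : ℤ) ≤ (a c r : ℤ) - 1 - (Hc G ecol c).degree v := by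
          intro v hv
          have hacv : a c v = a c r := by
            rw [ha]
            simp only []
            rw [hcmp_eq c r v ((hmem_cmp c r v).mp hv)]
          have := hFbound c v
          rw [hacv] at this
          push_cast
          omega
        calc ∑ v ∈ cmp c r, ((F c v).card : ℤ)
            ≤ ∑ v ∈ cmp c r, ((a c r : ℤ) - 1 - (Hc G ecol c).degree v) :=
              Finset.sum_le_sum hpt
          _ = (a c r : ℤ) * ((a c r : ℤ) - 1) - 2 * ek c r := by
              rw [Finset.sum_sub_distrib, Finset.sum_const]
              have hcc : (cmp c r).card = a c r := rfl
              rw [hcc]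
              have hdd : ∑ v ∈ cmp c r, ((Hc G ecol c).degree v : ℤ) = 2 * ek c r := by
                exact_mod_cast congrArg (Nat.cast : ℕ → ℤ) (hsum_deg_cmp c r hr)
              rw [hdd]
              push_cast
              ring
      have h4 : ∀ c ∈ A, ∀ r ∈ Reps c,
          ((a c r : ℤ)) * ((a c r : ℤ) - 1) - 2 * ek c r ≤ ((M : ℤ) - 1) * b c r := by
        intro c hc r hr
        have hrk := hrank c r hr
        have hrkZ : (a c r : ℤ) ≤ (ek c r : ℤ) + 1 := by exact_mod_cast hrk
        by_cases hsm : a c r ≤ 2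
        · have hb0 : b c r = 0 := by
            rw [hb]
            simp only []
            rw [max_eq_right]
            have : (a c r : ℤ) ≤ 2 := by exact_mod_cast hsm
            omega
          rw [hb0, mul_zero]
          have ha1' : (1 : ℤ) ≤ (a c r : ℤ) := by exact_mod_cast ha1 c r
          have ha2' : (a c r : ℤ) ≤ 2 := by exact_mod_cast hsm
          nlinarith
        · push_neg at hsm
          have hbM : b c r = (a c r : ℤ) - 2 := by
            rw [hb]
            simp only []
            rw [max_eq_left]
            have : (3 : ℤ) ≤ (a c r : ℤ) := by exact_mod_cast hsm
            omega
          have haM : (a c r : ℤ) ≤ M := by exact_mod_cast hMmax c hc r hsm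
          have h3' : (3 : ℤ) ≤ (a c r : ℤ) := by exact_mod_cast hsm
          rw [hbM]
          nlinarith
      calc (n : ℤ) * ((n : ℤ) - 1) - 2 * m' = ∑ v : V, ((NN v).card : ℤ) := h1.symm
        _ ≤ ∑ c ∈ A, ∑ v : V, ((F c v).card : ℤ) := h2
        _ ≤ ∑ c ∈ A, ∑ r ∈ Reps c, (((a c r : ℤ)) * ((a c r : ℤ) - 1) - 2 * ek c r) :=
            Finset.sum_le_sum h3
        _ ≤ ∑ c ∈ A, ∑ r ∈ Reps c, ((M : ℤ) - 1) * b c r :=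
            Finset.sum_le_sum (fun c hc => Finset.sum_le_sum (fun r hr => h4 c hc r hr))
        _ = ((M : ℤ) - 1) * ∑ c ∈ A, ∑ r ∈ Reps c, b c r := by
            rw [Finset.mul_sum]
            exact Finset.sum_congr rfl (fun c _ => by rw [Finset.mul_sum])
    -- contradiction
    have hM1 : (1 : ℤ) ≤ (M : ℤ) := by
      have : (3 : ℤ) ≤ (M : ℤ) := by exact_mod_cast hM3
      omega
    have hBnn : (0 : ℤ) ≤ ∑ c ∈ A, ∑ r ∈ Reps c, b c r :=
      Finset.sum_nonneg (fun c _ => Finset.sum_nonneg (fun r _ => hb_nonneg c r))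
    have hn3 : (0 : ℤ) ≤ (n : ℤ) - 3 := by
      have : (4 : ℤ) ≤ (n : ℤ) := by exact_mod_cast hn
      omega
    have hfin1 : (n : ℤ) * ((n : ℤ) - 1) - 2 * m' ≤ ((M : ℤ) - 1) * ((n : ℤ) - 3) := by
      calc (n : ℤ) * ((n : ℤ) - 1) - 2 * m'
          ≤ ((M : ℤ) - 1) * ∑ c ∈ A, ∑ r ∈ Reps c, b c r := hglobal
        _ ≤ ((M : ℤ) - 1) * ((n : ℤ) - 3) := by
            apply mul_le_mul_of_nonneg_left hB
            omega
    have hfin2 : ((M : ℤ) - 1) * ((n : ℤ) - 3) ≤ ((G.maxDegree : ℤ) - 1) * ((n : ℤ) - 3) := by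
      apply mul_le_mul_of_nonneg_right _ hn3
      omega
    rw [hmEF] at hdegZ
    nlinarith
  · -- no nontrivial component at all : G is complete, contradiction
    push_neg at hbig
    have hNN0 : ∀ v, NN v = ∅ := by
      intro v
      have h := hNNsub v
      have hBe : A.biUnion (fun c => F c v) = ∅ := by
        rw [Finset.eq_empty_iff_forall_notMem]
        intro u hu
        obtain ⟨c, hc, hu'⟩ := Finset.mem_biUnion.mp hu
        rw [hFsmall c v (by have := hbig c hc v; omega)] at hu'
        exact absurd hu' (Finset.notMem_empty u)
      rw [hBe] at h
      exact Finset.subset_empty.mp h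
    have hdegn : ∀ v : V, 1 + G.degree v = n := by
      intro v
      have := hNNcard v
      rw [hNN0 v, Finset.card_empty] at this
      omega
    have h2m : n * (n - 1) = 2 * m' := by
      have hh := SimpleGraph.sum_degrees_eq_twice_card_edges G
      have : ∑ v : V, G.degree v = n * (n - 1) := by
        rw [Finset.sum_congr rfl (fun v _ => by have := hdegn v; omega : ∀ v ∈ univ, G.degree v = n - 1)]
        rw [Finset.sum_const, Finset.card_univ, ← hndef, smul_eq_mul]
      omega
    have hne : Nonempty V := Fintype.card_pos_iff.mp (by omega)
    obtain ⟨v⟩ := hne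
    have hΔ : n - 1 ≤ G.maxDegree := by
      have h1 := G.degree_le_maxDegree v
      have h2 := hdegn v
      omega
    rw [hmEF] at hdegZ
    have h2mZ : (n : ℤ) * ((n : ℤ) - 1) = 2 * m' := by
      have h4 : (1 : ℕ) ≤ n := by omega
      zify [h4] at h2m
      linarith
    have hΔZ : (n : ℤ) - 1 ≤ (G.maxDegree : ℤ) := by
      have h4 : (1 : ℕ) ≤ n := by omega
      zify [h4] at hΔ
      linarith
    have hn4Z : (4 : ℤ) ≤ (n : ℤ) := by exact_mod_cast hn
    nlinarith

end TMCAux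

open Finset in
set_option maxHeartbeats 1000000 in
/-- If `G` is a connected graph of order `n > 3` with
`Δ(G) < n - (2m - 3(n-1))/(n-3)`, then `tmc(G) = m - n + 2 + l(G)`. -/
theorem stmt_10 {V : Type*} [Fintype V] [DecidableEq V] (G : SimpleGraph V)
    [DecidableRel G.Adj] (hn : 3 < Fintype.card V) (hG : G.Connected)
    (hdeg : (G.maxDegree : ℚ) < (Fintype.card V : ℚ) -
      (2 * (G.edgeSet.ncard : ℚ) - 3 * ((Fintype.card V : ℚ) - 1)) /
        ((Fintype.card V : ℚ) - 3)) :
    (tmc G : ℤ) = (G.edgeSet.ncard : ℤ) - Fintype.card V + 2 + maxLeaves G := by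
  classical
  set n := Fintype.card V with hndef
  set m := G.edgeSet.ncard with hmdef
  set L := maxLeaves G with hLdef
  have hn4 : 4 ≤ n := hn
  have hmEF : G.edgeFinset.card = m := by
    rw [hmdef, ← coe_edgeFinset, Set.ncard_coe_finset]
  -- ℤ form of the degree hypothesis
  have hdegZ : 2 * (m : ℤ) + G.maxDegree * ((n : ℤ) - 3) < (n : ℤ) ^ 2 - 3 := by
    have h3 : (0 : ℚ) < (n : ℚ) - 3 := by
      have : (3 : ℚ) < (n : ℚ) := by exact_mod_cast hn
      linarith
    have h4 : (2 * (m : ℚ) - 3 * ((n : ℚ) - 1)) / ((n : ℚ) - 3)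
        < (n : ℚ) - G.maxDegree := by
      have := hdeg
      linarith
    have h5 : 2 * (m : ℚ) - 3 * ((n : ℚ) - 1)
        < ((n : ℚ) - G.maxDegree) * ((n : ℚ) - 3) := (div_lt_iff₀ h3).mp h4
    have h6 : 2 * (m : ℚ) + (G.maxDegree : ℚ) * ((n : ℚ) - 3) < (n : ℚ) ^ 2 - 3 := by
      nlinarith [h5]
    exact_mod_cast h6
  -- a spanning tree of G
  obtain ⟨T₁, hT₁G, hT₁⟩ := TMCAux.exists_isTree_le hG
  have treecard : ∀ T : SimpleGraph V, T ≤ G → T.IsTree → T.edgeSet.ncard + 1 = n := by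
    intro T _ hT
    rw [← coe_edgeFinset, Set.ncard_coe_finset]
    exact hT.card_edgeFinset
  have hmn : n - 1 ≤ m := by
    have h1 := treecard T₁ hT₁G hT₁
    have h2 : T₁.edgeSet.ncard ≤ m :=
      Set.ncard_le_ncard (edgeSet_mono hT₁G) G.edgeSet.toFinite
    omega
  -- maxLeaves facts
  have hLbdd : ∀ k ∈ {k | ∃ T : SimpleGraph V, T ≤ G ∧ T.IsTree ∧ leafCount T = k}, k ≤ n := by
    rintro k ⟨T, _, _, rfl⟩
    rw [leafCount]
    calc {v : V | (T.neighborSet v).ncard = 1}.ncard ≤ (Set.univ : Set V).ncard :=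
          Set.ncard_le_ncard (Set.subset_univ _) Set.finite_univ
      _ = n := by rw [Set.ncard_univ, Nat.card_eq_fintype_card]
  have hLmem : L ∈ {k | ∃ T : SimpleGraph V, T ≤ G ∧ T.IsTree ∧ leafCount T = k} := by
    rw [hLdef, maxLeaves]
    exact Nat.sSup_mem ⟨_, T₁, hT₁G, hT₁, rfl⟩ ⟨n, hLbdd⟩
  -- G is not complete
  have hnc : ∃ u v : V, u ≠ v ∧ ¬ G.Adj u v := by
    by_contra hcomp
    push_neg at hcomp
    have hdeg' : ∀ v : V, G.degree v = n - 1 := by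
      intro v
      have : G.neighborFinset v = univ.erase v := by
        ext w
        simp only [mem_neighborFinset, Finset.mem_erase, Finset.mem_univ, and_true]
        exact ⟨fun h => (G.ne_of_adj h).symm, fun h => (hcomp v w (Ne.symm h))⟩
      rw [degree, this, Finset.card_erase_of_mem (mem_univ v), Finset.card_univ]
    have h2m : n * (n - 1) = 2 * m := by
      rw [← hmEF, ← sum_degrees_eq_twice_card_edges]
      rw [Finset.sum_congr rfl (fun v _ => hdeg' v), Finset.sum_const, Finset.card_univ,
        smul_eq_mul]
    have hne : Nonempty V := by
      have : 0 < n := by omega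
      exact Fintype.card_pos_iff.mp this
    obtain ⟨v⟩ := hne
    have hΔ : n - 1 ≤ G.maxDegree := by
      rw [← hdeg' v]; exact G.degree_le_maxDegree v
    have h2mZ : (n : ℤ) * ((n : ℤ) - 1) = 2 * m := by
      have hn1 : (1 : ℤ) ≤ n := by exact_mod_cast (by omega : 1 ≤ n)
      have := h2m
      zify [show 1 ≤ n by omega] at this
      linarith
    have hΔZ : (n : ℤ) - 1 ≤ (G.maxDegree : ℤ) := by
      have := hΔ
      zify [show 1 ≤ n by omega] at this
      linarith
    have hn3 : (0 : ℤ) ≤ (n : ℤ) - 3 := by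
      have : (4 : ℤ) ≤ n := by exact_mod_cast hn4
      linarith
    nlinarith [hdegZ, mul_le_mul_of_nonneg_right hΔZ hn3]
  -- the set of values of TMC colorings
  set S : Set ℕ :=
    {k | ∃ vcol ecol, IsTMCColoring G vcol ecol ∧ totalColorsUsed G vcol ecol = k} with hSdef
  have hub : ∀ k ∈ S, k + n ≤ m + 2 + L := by
    rintro k ⟨vcol, ecol, hcol, rfl⟩
    set A : Finset ℕ := G.edgeFinset.image ecol with hA
    have htcu : totalColorsUsed G vcol ecol = ((univ.image vcol) ∪ A).card := by
      rw [totalColorsUsed, ← Set.ncard_coe_finset]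
      congr 1
      rw [coe_union, coe_image, coe_image, coe_univ, Set.image_univ, coe_edgeFinset]
    have hcov : ∀ u v : V, u ≠ v → ¬ G.Adj u v →
        ∃ c ∈ A, (TMCAux.Hc G ecol c).Reachable u v := by
      intro u v hne hnadj
      obtain ⟨p, hpath, c, hec, hvc⟩ := hcol u v
      have hcA : c ∈ A := by
        cases p with
        | nil => exact absurd rfl hne
        | @cons _ b _ hadj q =>
          rw [hA, ← hec s(u, b) (by simp)]
          exact mem_image_of_mem ecol (mem_edgeFinset.mpr hadj)
      refine ⟨c, hcA, TMCAux.reachable_transfer p (fun e he => ?_)⟩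
      induction e using Sym2.inductionOn with
      | hf a b =>
        exact ⟨p.edges_subset_edgeSet he, hec _ he⟩
    have hcore := TMCAux.core G hn4 hdegZ ecol hcov
    obtain ⟨T, hTG, hT, hTle⟩ := TMCAux.verts_part G hG (by omega) hnc vcol ecol hcol
    have hTL : leafCount T ≤ L :=
      le_csSup ⟨n, fun k hk => hLbdd k hk⟩ ⟨T, hTG, hT, rfl⟩
    have hcard : ((univ.image vcol) ∪ A).card ≤ A.card + ((univ.image vcol) \ A).card := by
      rw [Finset.union_comm, ← Finset.union_sdiff_self_eq_union]
      exact Finset.card_union_le _ _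
    have h2 : A.card + n ≤ m + 2 := hcore
    have h3 : ((univ.image vcol) \ A).card ≤ L := le_trans hTle hTL
    rw [htcu]
    omega
  -- the witness coloring
  obtain ⟨T₀, hT₀G, hT₀, hT₀L⟩ := hLmem
  obtain ⟨vcol, ecol, hcol, hcount⟩ := TMCAux.tmc_ge G (by omega) T₀ hT₀G hT₀
  have hT₀n : T₀.edgeSet.ncard + 1 = n := treecard T₀ hT₀G hT₀
  have hk₀ : totalColorsUsed G vcol ecol = 1 + L + (m - (n - 1)) := by
    rw [hcount, hT₀L, ← hmdef]
    congr 1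
    omega
  have hmem : (1 + L + (m - (n - 1))) ∈ S := ⟨vcol, ecol, hcol, hk₀⟩
  have htmc : tmc G = 1 + L + (m - (n - 1)) := by
    rw [tmc, ← hSdef]
    apply le_antisymm
    · apply csSup_le ⟨_, hmem⟩
      intro k hk
      have := hub k hk
      omega
    · exact le_csSup ⟨m + 2 + L, fun k hk => by have := hub k hk; omega⟩ hmem
  rw [htmc]
  omega
end

section
/- Let G be a connected graph of order n > 3 with m edges and diameter at least 3. Then tmc(G) = m − n + 2 + l(G). -/
open SimpleGraph

section Aux
variable {V : Type*}

lemma two_le_length_of_internal {G : SimpleGraph V} {u v w : V} (p : G.Walk u v)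
    (hw : w ∈ p.support) (hwu : w ≠ u) (hwv : w ≠ v) : 2 ≤ p.length := by
  match p with
  | .nil =>
    simp only [Walk.support_nil, List.mem_singleton] at hw
    exact absurd hw hwu
  | .cons h .nil =>
    simp only [Walk.support_cons, Walk.support_nil, List.mem_cons, List.mem_singleton] at hw
    rcases hw with rfl | rfl | h'
    · exact absurd rfl hwu
    · exact absurd rfl hwv
    · exact absurd h' (by simp)
  | .cons h (.cons h' q) =>
    simp only [Walk.length_cons]
    omega

lemma exists_second_vertex {G : SimpleGraph V} {x w : V} (p : G.Walk x w)
    (hp : p.IsPath) (hl : 2 ≤ p.length) :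
    ∃ z, G.Adj x z ∧ z ≠ w ∧ s(x, z) ∈ p.edges ∧ z ∈ p.support := by
  match p with
  | .nil => simp at hl
  | .cons (v := z) h q =>
    refine ⟨z, h, ?_, by simp, by simp⟩
    rintro rfl
    have hq : q.IsPath := hp.of_cons
    have hnil := (Walk.isPath_iff_eq_nil).mp hq
    subst hnil
    simp at hl

lemma internal_two_neighbors {G : SimpleGraph V} {u v w : V} (p : G.Walk u v) (hp : p.IsPath)
    (hw : w ∈ p.support) (hwu : w ≠ u) (hwv : w ≠ v) :
    ∃ a b, a ≠ b ∧ G.Adj w a ∧ G.Adj w b := by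
  induction p with
  | nil =>
    simp only [Walk.support_nil, List.mem_singleton] at hw
    exact absurd hw hwu
  | @cons u' b v' h q ih =>
    rw [Walk.support_cons, List.mem_cons] at hw
    rcases hw with rfl | hw
    · exact absurd rfl hwu
    · by_cases hb : w = b
      · subst hb
        cases q with
        | nil => exact absurd rfl hwv
        | @cons _ c _ h' q' =>
          refine ⟨u', c, ?_, h.symm, h'⟩
          have hns : u' ∉ (Walk.cons h' q').support :=
            ((Walk.cons_isPath_iff _ _).mp hp).2
          intro hdf
          apply hns
          rw [Walk.support_cons, hdf]
          exact List.mem_cons_of_mem _ q'.start_mem_support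
      · exact ih hp.of_cons hw hb hwv



section Aux2
variable {V : Type*}

/-- The subgraph of `G` consisting of edges of color `c`. -/
def colorGraph (G : SimpleGraph V) (ecol : Sym2 V → ℕ) (c : ℕ) : SimpleGraph V where
  Adj a b := G.Adj a b ∧ ecol s(a, b) = c
  symm := ⟨fun a b h => ⟨h.1.symm, by rw [Sym2.eq_swap]; exact h.2⟩⟩
  loopless := ⟨fun a h => G.irrefl h.1⟩

lemma colorGraph_le {G : SimpleGraph V} {ecol : Sym2 V → ℕ} {c : ℕ} :
    colorGraph G ecol c ≤ G := fun _ _ h => h.1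

lemma mem_colorGraph_edgeSet {G : SimpleGraph V} {ecol : Sym2 V → ℕ} {c : ℕ} {e : Sym2 V} :
    e ∈ (colorGraph G ecol c).edgeSet ↔ e ∈ G.edgeSet ∧ ecol e = c := by
  induction e using Sym2.inductionOn with
  | _ a b => exact Iff.rfl

lemma exists_pred {F : SimpleGraph V} {x v : V} (hr : F.Reachable x v) (hne : v ≠ x) :
    ∃ u, F.Adj u v ∧ F.Reachable x u ∧ F.dist x u + 1 = F.dist x v := by
  obtain ⟨p, hp⟩ := (hr.symm).exists_walk_length_eq_dist
  cases p with
  | nil => exact absurd rfl hne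
  | @cons _ u _ h q =>
    refine ⟨u, h.symm, ⟨q.reverse⟩, ?_⟩
    have h1 : F.dist x u ≤ q.length := by
      have := dist_le q.reverse
      simpa using this
    obtain ⟨r, hr2⟩ := Reachable.exists_walk_length_eq_dist (⟨q.reverse⟩ : F.Reachable x u)
    have h2 : F.dist x v ≤ F.dist x u + 1 := by
      have := dist_le (r.concat h.symm)
      rwa [Walk.length_concat, hr2] at this
    have h3 : q.length + 1 = F.dist x v := by
      have : (Walk.cons h q).length = F.dist v x := hp
      rw [Walk.length_cons] at this
      rwa [dist_comm] at this
    omega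

lemma ncard_le_ncard_reach_edges [Fintype V] (F : SimpleGraph V) (x : V) (S : Set V)
    (hS : ∀ v ∈ S, F.Reachable x v) (hx : x ∉ S) :
    S.ncard ≤ {e | e ∈ F.edgeSet ∧ ∃ a, a ∈ e ∧ F.Reachable x a}.ncard := by
  classical
  have hpred : ∀ v : V, ∃ u, v ∈ S → F.Adj u v ∧ F.Reachable x u ∧ F.dist x u + 1 = F.dist x v := by
    intro v
    by_cases hv : v ∈ S
    · obtain ⟨u, hu⟩ := exists_pred (hS v hv) (by rintro rfl; exact hx hv)
      exact ⟨u, fun _ => hu⟩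
    · exact ⟨x, fun h => absurd h hv⟩
  choose f hf using hpred
  apply Set.ncard_le_ncard_of_injOn (fun v => s(f v, v))
  · intro v hv
    obtain ⟨h1, h2, _⟩ := hf v hv
    exact ⟨h1, f v, by simp, h2⟩
  · intro v hv v' hv' heq
    rw [Sym2.eq_iff] at heq
    rcases heq with ⟨-, h⟩ | ⟨h1, h2⟩
    · exact h
    · obtain ⟨-, -, hd1⟩ := hf v hv
      obtain ⟨-, -, hd2⟩ := hf v' hv'
      rw [← h2, ← h1] at hd2
      omega

lemma exists_spanning_tree [Fintype V] (H : SimpleGraph V) (hH : H.Connected) :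
    ∃ T, T ≤ H ∧ T.IsTree := by
  classical
  obtain ⟨k, hk⟩ : ∃ k, H.edgeSet.ncard = k := ⟨_, rfl⟩
  induction k using Nat.strong_induction_on generalizing H with
  | _ k ih =>
    by_cases ha : H.IsAcyclic
    · exact ⟨H, le_rfl, ⟨hH, ha⟩⟩
    · rw [isAcyclic_iff_forall_adj_isBridge] at ha
      push_neg at ha
      obtain ⟨v, w, hadj, hnb⟩ := ha
      rw [isBridge_iff] at hnb
      push_neg at hnb
      have hreach : (H \ fromEdgeSet {s(v, w)}).Reachable v w := hnb
      have hle : H \ fromEdgeSet {s(v, w)} ≤ H := sdiff_le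
      have hpre : (H \ fromEdgeSet {s(v, w)}).Preconnected := by
        intro a b
        obtain ⟨p⟩ := hH.preconnected a b
        induction p with
        | nil => exact Reachable.refl _
        | @cons a c b hac q ih2 =>
          refine Reachable.trans ?_ ih2
          by_cases he : s(a, c) = s(v, w)
          · rw [Sym2.eq_iff] at he
            rcases he with ⟨rfl, rfl⟩ | ⟨rfl, rfl⟩
            · exact hreach
            · exact hreach.symm
          · refine Adj.reachable ?_
            rw [sdiff_adj]
            refine ⟨hac, ?_⟩
            rw [fromEdgeSet_adj]
            rintro ⟨hmem, -⟩
            exact he (Set.mem_singleton_iff.mp hmem)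
      have hconn : (H \ fromEdgeSet {s(v, w)}).Connected := by
        have := hH.nonempty
        exact ⟨hpre⟩
      have hcard : (H \ fromEdgeSet {s(v, w)}).edgeSet.ncard < k := by
        have he : (H \ fromEdgeSet {s(v, w)}).edgeSet = H.edgeSet \ {s(v, w)} := by
          rw [edgeSet_sdiff, edgeSet_fromEdgeSet, edgeSet_sdiff_sdiff_isDiag]
        rw [he, ← hk]
        exact Set.ncard_diff_singleton_lt_of_mem hadj (Set.toFinite _)
      obtain ⟨T, hT1, hT2⟩ := ih _ hcard _ hconn rfl
      exact ⟨T, hT1.trans hle, hT2⟩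

end Aux2

end Aux


section MC
variable {V : Type*}

lemma mc_upper [Fintype V] {G : SimpleGraph V} (hG : G.Connected)
    {ecol : Sym2 V → ℕ} (hmc : IsMCColoring G ecol) {x y : V} (hxy : 3 ≤ G.dist x y) :
    (ecol '' G.edgeSet).ncard + (Fintype.card V - 2) ≤ G.edgeSet.ncard := by
  classical
  have hxny : x ≠ y := by
    rintro rfl
    rw [SimpleGraph.dist_self] at hxy
    omega
  have dist2 : ∀ a b c : V, G.Adj a b → G.Adj b c → G.dist a c ≤ 2 := by
    intro a b c h1 h2
    simpa using dist_le (Walk.cons h1 (Walk.cons h2 Walk.nil))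
  have hnadjxy : ¬ G.Adj x y := by
    intro h
    rw [← SimpleGraph.dist_eq_one_iff_adj] at h
    omega
  set EF : Finset (Sym2 V) := G.edgeSet.toFinite.toFinset with hEF
  have hEFc : ∀ e, e ∈ EF ↔ e ∈ G.edgeSet := by
    intro e; rw [hEF, Set.Finite.mem_toFinset]
  set CEF : Finset ℕ := EF.image ecol with hCEF
  set W : Finset V := Finset.univ \ {x, y} with hW
  have hWmem : ∀ w, w ∈ W ↔ (w ≠ x ∧ w ≠ y) := by
    intro w; simp [hW]
  have main : ∀ w, w ≠ x → w ≠ y → ∃ c : ℕ,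
      (colorGraph G ecol c).Reachable (if G.Adj x w then y else x) w ∧
      ∃ z, (colorGraph G ecol c).Adj (if G.Adj x w then y else x) z := by
    intro w hwx hwy
    set b := if G.Adj x w then y else x with hb
    have hdist : 2 ≤ G.dist b w := by
      by_cases hadj : G.Adj x w
      · rw [hb, if_pos hadj]
        have h1 : ¬ G.Adj y w := by
          intro h
          have := dist2 x w y hadj h.symm
          omega
        have h0 : G.dist y w ≠ 0 := by
          rw [SimpleGraph.dist_ne_zero_iff_ne_and_reachable]
          exact ⟨Ne.symm hwy, hG.preconnected y w⟩
        have h1' : G.dist y w ≠ 1 := by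
          rw [Ne, SimpleGraph.dist_eq_one_iff_adj]; exact h1
        omega
      · rw [hb, if_neg hadj]
        have h0 : G.dist x w ≠ 0 := by
          rw [SimpleGraph.dist_ne_zero_iff_ne_and_reachable]
          exact ⟨Ne.symm hwx, hG.preconnected x w⟩
        have h1' : G.dist x w ≠ 1 := by
          rw [Ne, SimpleGraph.dist_eq_one_iff_adj]
          intro h; exact hadj h
        omega
    obtain ⟨p, hp, c, hc⟩ := hmc b w
    have hlen : 2 ≤ p.length := le_trans hdist (dist_le p)
    obtain ⟨z, hbz, hzw, hez, hzs⟩ := exists_second_vertex p hp hlen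
    refine ⟨c, ?_, z, hbz, hc _ hez⟩
    refine ⟨p.transfer _ ?_⟩
    intro e he
    rw [mem_colorGraph_edgeSet]
    exact ⟨Walk.edges_subset_edgeSet _ he, hc e he⟩
  set t : V → ℕ := fun w => if h : w ≠ x ∧ w ≠ y then (main w h.1 h.2).choose else 0 with ht
  have htspec : ∀ w ∈ W,
      (colorGraph G ecol (t w)).Reachable (if G.Adj x w then y else x) w ∧
      ∃ z, (colorGraph G ecol (t w)).Adj (if G.Adj x w then y else x) z := by
    intro w hw
    obtain ⟨h1, h2⟩ := (hWmem w).mp hw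
    have heq : t w = (main w h1 h2).choose := by
      rw [ht]
      simp only
      rw [dif_pos (⟨h1, h2⟩ : w ≠ x ∧ w ≠ y)]
    rw [heq]
    exact (main w h1 h2).choose_spec
  have htmem : ∀ w ∈ W, t w ∈ CEF := by
    intro w hw
    obtain ⟨-, z, hadj⟩ := htspec w hw
    exact Finset.mem_image.mpr ⟨s((if G.Adj x w then y else x), z),
      (hEFc _).mpr hadj.1, hadj.2⟩
  have hsum1 : EF.card = ∑ c ∈ CEF, (EF.filter (fun e => ecol e = c)).card :=
    Finset.card_eq_sum_card_fiberwise (fun e he => Finset.mem_image_of_mem _ he)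
  have hsum2 : W.card = ∑ c ∈ CEF, (W.filter (fun w => t w = c)).card :=
    Finset.card_eq_sum_card_fiberwise htmem
  have key : ∀ c ∈ CEF,
      (W.filter (fun w => t w = c)).card + 1 ≤ (EF.filter (fun e => ecol e = c)).card := by
    intro c hc
    set F := colorGraph G ecol c with hF
    set Ec : Set (Sym2 V) := {e | e ∈ G.edgeSet ∧ ecol e = c} with hEc
    have hEcard2 : (EF.filter (fun e => ecol e = c)).card = Ec.ncard := by
      rw [← Set.ncard_coe_finset, Finset.coe_filter]
      congr 1
      ext e
      simp only [Set.mem_setOf_eq, hEc, hEFc]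
    rw [hEcard2]
    have hbound : ∀ (a : V) (S : Set V), (∀ v ∈ S, F.Reachable a v) → a ∉ S →
        S.ncard ≤ {e | e ∈ F.edgeSet ∧ ∃ z, z ∈ e ∧ F.Reachable a z}.ncard :=
      fun a S h1 h2 => ncard_le_ncard_reach_edges F a S h1 h2
    have hsubE : ∀ a : V, {e | e ∈ F.edgeSet ∧ ∃ z, z ∈ e ∧ F.Reachable a z} ⊆ Ec := by
      intro a e he
      exact mem_colorGraph_edgeSet.mp he.1
    set Wfib := W.filter (fun w => t w = c) with hWfib
    set Wx := Wfib.filter (fun w => ¬ G.Adj x w) with hWx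
    set Wy := Wfib.filter (fun w => G.Adj x w) with hWy
    have hsplit : Wy.card + Wx.card = Wfib.card := by
      rw [hWy, hWx]
      exact Finset.card_filter_add_card_filter_not _
    have hWxmem : ∀ w ∈ Wx, (w ∈ W ∧ t w = c) ∧ ¬ G.Adj x w := by
      intro w hw
      rw [hWx, Finset.mem_filter, hWfib, Finset.mem_filter] at hw
      tauto
    have hWymem : ∀ w ∈ Wy, (w ∈ W ∧ t w = c) ∧ G.Adj x w := by
      intro w hw
      rw [hWy, Finset.mem_filter, hWfib, Finset.mem_filter] at hw
      tauto
    have hreachx : ∀ w ∈ Wx, F.Reachable x w := by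
      intro w hw
      obtain ⟨⟨hw1, hw2⟩, hw3⟩ := hWxmem w hw
      have h := (htspec w hw1).1
      rw [hw2, if_neg hw3] at h
      exact h
    have hreachy : ∀ w ∈ Wy, F.Reachable y w := by
      intro w hw
      obtain ⟨⟨hw1, hw2⟩, hw3⟩ := hWymem w hw
      have h := (htspec w hw1).1
      rw [hw2, if_pos hw3] at h
      exact h
    have hzx : ∀ w ∈ Wx, ∃ z, F.Adj x z := by
      intro w hw
      obtain ⟨⟨hw1, hw2⟩, hw3⟩ := hWxmem w hw
      obtain ⟨z, hz⟩ := (htspec w hw1).2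
      rw [hw2, if_neg hw3] at hz
      exact ⟨z, hz⟩
    have hzy : ∀ w ∈ Wy, ∃ z, F.Adj y z := by
      intro w hw
      obtain ⟨⟨hw1, hw2⟩, hw3⟩ := hWymem w hw
      obtain ⟨z, hz⟩ := (htspec w hw1).2
      rw [hw2, if_pos hw3] at hz
      exact ⟨z, hz⟩
    rcases Finset.eq_empty_or_nonempty Wx with hWx0 | ⟨w0, hw0⟩
    · rcases Finset.eq_empty_or_nonempty Wy with hWy0 | ⟨w1, hw1⟩
      · rw [hWx0, hWy0] at hsplit
        simp only [Finset.card_empty] at hsplit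
        have hcne : Ec.Nonempty := by
          obtain ⟨e, he, hec⟩ := Finset.mem_image.mp hc
          exact ⟨e, (hEFc e).mp he, hec⟩
        have hpos := (Set.ncard_pos (Set.toFinite Ec)).mpr hcne
        omega
      · obtain ⟨z0, hz0⟩ := hzy w1 hw1
        have hz0G : G.Adj y z0 := hz0.1
        have hz0nx : ¬ G.Adj x z0 := by
          intro h
          have := dist2 x z0 y h hz0G.symm
          omega
        have hz0notin : z0 ∉ (↑Wy : Set V) := by
          intro hmem
          exact hz0nx (hWymem z0 hmem).2
        have hScard : (insert z0 (↑Wy : Set V)).ncard = Wy.card + 1 := by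
          rw [Set.ncard_insert_of_notMem hz0notin (Set.toFinite _), Set.ncard_coe_finset]
        have hSb : (insert z0 (↑Wy : Set V)).ncard ≤ Ec.ncard := by
          refine le_trans (hbound y _ ?_ ?_) (Set.ncard_le_ncard (hsubE y) (Set.toFinite _))
          · intro v hv
            rcases Set.mem_insert_iff.mp hv with rfl | hv
            · exact hz0.reachable
            · exact hreachy v hv
          · intro hmem
            rcases Set.mem_insert_iff.mp hmem with h | h
            · exact hz0G.ne h
            · exact ((hWmem y).mp (hWymem y h).1.1).2 rfl
        rw [hWx0] at hsplit
        simp only [Finset.card_empty] at hsplit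
        omega
    · obtain ⟨z0, hz0⟩ := hzx w0 hw0
      have hz0G : G.Adj x z0 := hz0.1
      have hz0notin : z0 ∉ (↑Wx : Set V) := by
        intro hmem
        exact (hWxmem z0 hmem).2 hz0G
      have hxcard : (insert z0 (↑Wx : Set V)).ncard = Wx.card + 1 := by
        rw [Set.ncard_insert_of_notMem hz0notin (Set.toFinite _), Set.ncard_coe_finset]
      have hxS : ∀ v ∈ insert z0 (↑Wx : Set V), F.Reachable x v := by
        intro v hv
        rcases Set.mem_insert_iff.mp hv with rfl | hv
        · exact hz0.reachable
        · exact hreachx v hv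
      have hxnotmem : x ∉ insert z0 (↑Wx : Set V) := by
        intro hmem
        rcases Set.mem_insert_iff.mp hmem with h | h
        · exact hz0G.ne h
        · exact ((hWmem x).mp (hWxmem x h).1.1).1 rfl
      rcases Finset.eq_empty_or_nonempty Wy with hWy0 | ⟨w1, hw1⟩
      · have hSb : (insert z0 (↑Wx : Set V)).ncard ≤ Ec.ncard :=
          le_trans (hbound x _ hxS hxnotmem) (Set.ncard_le_ncard (hsubE x) (Set.toFinite _))
        rw [hWy0] at hsplit
        simp only [Finset.card_empty] at hsplit
        omega
      · by_cases hrxy : F.Reachable x y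
        · have hynotin : y ∉ (↑Wx ∪ ↑Wy : Set V) := by
            intro hmem
            rcases hmem with h | h
            · exact ((hWmem y).mp (hWxmem y h).1.1).2 rfl
            · exact ((hWmem y).mp (hWymem y h).1.1).2 rfl
          have hdisjW : Disjoint Wx Wy := by
            rw [Finset.disjoint_left]
            intro w hwx' hwy'
            exact (hWxmem w hwx').2 (hWymem w hwy').2
          have hucard : ((↑Wx ∪ ↑Wy : Set V)).ncard = Wx.card + Wy.card := by
            rw [← Finset.coe_union, Set.ncard_coe_finset, Finset.card_union_of_disjoint hdisjW]
          have hScard : (insert y (↑Wx ∪ ↑Wy : Set V)).ncard = Wx.card + Wy.card + 1 := by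
            rw [Set.ncard_insert_of_notMem hynotin (Set.toFinite _), hucard]
          have hSb : (insert y (↑Wx ∪ ↑Wy : Set V)).ncard ≤ Ec.ncard := by
            refine le_trans (hbound x _ ?_ ?_) (Set.ncard_le_ncard (hsubE x) (Set.toFinite _))
            · intro v hv
              rcases Set.mem_insert_iff.mp hv with rfl | hv
              · exact hrxy
              · rcases hv with h | h
                · exact hreachx v h
                · exact hrxy.trans (hreachy v h)
            · intro hmem
              rcases Set.mem_insert_iff.mp hmem with h | h
              · exact hxny h
              · rcases h with h | h
                · exact ((hWmem x).mp (hWxmem x h).1.1).1 rfl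
                · exact ((hWmem x).mp (hWymem x h).1.1).1 rfl
          omega
        · have hdisj : Disjoint {e | e ∈ F.edgeSet ∧ ∃ z, z ∈ e ∧ F.Reachable x z}
              {e | e ∈ F.edgeSet ∧ ∃ z, z ∈ e ∧ F.Reachable y z} := by
            rw [Set.disjoint_left]
            rintro e ⟨heF, z1, hz1e, hz1r⟩ ⟨-, z2, hz2e, hz2r⟩
            by_cases hzz : z1 = z2
            · subst hzz
              exact hrxy (hz1r.trans hz2r.symm)
            · have he : e = s(z1, z2) := (Sym2.mem_and_mem_iff hzz).mp ⟨hz1e, hz2e⟩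
              rw [he] at heF
              have hadj12 : F.Adj z1 z2 := heF
              exact hrxy ((hz1r.trans hadj12.reachable).trans hz2r.symm)
          have hx1 : (insert z0 (↑Wx : Set V)).ncard ≤
              {e | e ∈ F.edgeSet ∧ ∃ z, z ∈ e ∧ F.Reachable x z}.ncard :=
            hbound x _ hxS hxnotmem
          have hy1 : (↑Wy : Set V).ncard ≤
              {e | e ∈ F.edgeSet ∧ ∃ z, z ∈ e ∧ F.Reachable y z}.ncard := by
            refine hbound y _ ?_ ?_
            · intro v hv
              exact hreachy v hv
            · intro hmem
              exact ((hWmem y).mp (hWymem y hmem).1.1).2 rfl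
          have hcup : {e | e ∈ F.edgeSet ∧ ∃ z, z ∈ e ∧ F.Reachable x z}.ncard +
              {e | e ∈ F.edgeSet ∧ ∃ z, z ∈ e ∧ F.Reachable y z}.ncard ≤ Ec.ncard := by
            rw [← Set.ncard_union_eq hdisj (Set.toFinite _) (Set.toFinite _)]
            exact Set.ncard_le_ncard (Set.union_subset (hsubE x) (hsubE y)) (Set.toFinite _)
          have hwyc : (↑Wy : Set V).ncard = Wy.card := Set.ncard_coe_finset _
          omega
  have hfinal : CEF.card + W.card ≤ EF.card := by
    have h2' := Finset.sum_le_sum key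
    rw [Finset.sum_add_distrib, Finset.sum_const, smul_eq_mul, mul_one, ← hsum2] at h2'
    rw [hsum1]
    omega
  have hWcard : W.card = Fintype.card V - 2 := by
    rw [hW, Finset.card_sdiff_of_subset (Finset.subset_univ _), Finset.card_univ]
    congr 1
    rw [Finset.card_insert_of_notMem (by simp [hxny]), Finset.card_singleton]
  have hCEcard : (ecol '' G.edgeSet).ncard = CEF.card := by
    rw [hCEF, ← Set.ncard_coe_finset (EF.image ecol), Finset.coe_image, hEF,
      Set.Finite.coe_toFinset]
  have hEcard : G.edgeSet.ncard = EF.card := by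
    rw [hEF, ← Set.ncard_coe_finset (G.edgeSet.toFinite.toFinset), Set.Finite.coe_toFinset]
  omega

end MC


section Leafy
variable {V : Type*}

lemma exists_leafy_tree [Fintype V] {G : SimpleGraph V} (hG : G.Connected)
    (hcard : 2 ≤ Fintype.card V) (NF : Set V)
    (h1 : ∀ u v, u ∈ NF → v ∈ NF → ∃ p : G.Walk u v, ∀ w ∈ p.support, w ∈ NF)
    (h2 : ∀ w, w ∉ NF → ∃ z, G.Adj w z ∧ z ∈ NF) :
    ∃ T, T ≤ G ∧ T.IsTree ∧ ∀ w, w ∉ NF → (T.neighborSet w).ncard = 1 := by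
  classical
  have hne : Nonempty V := hG.nonempty
  have hf0 : ∀ w : V, ∃ z, w ∉ NF → G.Adj w z ∧ z ∈ NF := by
    intro w
    by_cases h : w ∉ NF
    · obtain ⟨z, hz⟩ := h2 w h
      exact ⟨z, fun _ => hz⟩
    · exact ⟨w, fun h' => absurd h' h⟩
  choose f hfspec using hf0
  let H : SimpleGraph V :=
    { Adj := fun a b => G.Adj a b ∧
        ((a ∈ NF ∧ b ∈ NF) ∨ (a ∉ NF ∧ b = f a) ∨ (b ∉ NF ∧ a = f b)),
      symm := by
        refine ⟨fun a b hab => ?_⟩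
        exact ⟨hab.1.symm, by tauto⟩,
      loopless := ⟨fun a h => G.irrefl h.1⟩ }
  have hHG : H ≤ G := fun a b h => h.1
  have hHadj_of : ∀ w, w ∉ NF → ∀ b, H.Adj w b → b = f w := by
    intro w hw b hb
    obtain ⟨hg, hcases⟩ := hb
    rcases hcases with ⟨h1', -⟩ | ⟨-, h2'⟩ | ⟨hb', h3'⟩
    · exact absurd h1' hw
    · exact h2'
    · exact absurd (h3' ▸ (hfspec b hb').2) hw
  have hwadj : ∀ w, w ∉ NF → H.Adj w (f w) := by
    intro w hw
    exact ⟨(hfspec w hw).1, Or.inr (Or.inl ⟨hw, rfl⟩)⟩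
  have hstep : ∀ a : V, ∃ a', a' ∈ NF ∧ H.Reachable a a' := by
    intro a
    by_cases h : a ∈ NF
    · exact ⟨a, h, Reachable.refl _⟩
    · exact ⟨f a, (hfspec a h).2, (hwadj a h).reachable⟩
  have hHpre : H.Preconnected := by
    intro a b
    obtain ⟨a', ha', hra⟩ := hstep a
    obtain ⟨b', hb', hrb⟩ := hstep b
    obtain ⟨p, hp⟩ := h1 a' b' ha' hb'
    have hmid : H.Reachable a' b' := by
      refine ⟨p.transfer H fun e he => ?_⟩
      refine Sym2.ind (fun c d he => ?_) e he
      exact (H.mem_edgeSet).mpr ⟨p.adj_of_mem_edges he,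
        Or.inl ⟨hp c (Walk.fst_mem_support_of_mem_edges p he),
          hp d (Walk.snd_mem_support_of_mem_edges p he)⟩⟩
    exact (hra.trans hmid).trans hrb.symm
  have hHconn : H.Connected := ⟨hHpre⟩
  obtain ⟨T, hTH, hTtree⟩ := exists_spanning_tree H hHconn
  refine ⟨T, hTH.trans hHG, hTtree, ?_⟩
  intro w hw
  have hsub : T.neighborSet w ⊆ {f w} := by
    intro b hb
    exact hHadj_of w hw b (hTH hb)
  have hnonempty : (T.neighborSet w).Nonempty := by
    have hnt : Nontrivial V := Fintype.one_lt_card_iff_nontrivial.mp hcard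
    obtain ⟨u, hu⟩ := exists_ne w
    obtain ⟨p⟩ := hTtree.isConnected.preconnected w u
    cases p with
    | nil => exact absurd rfl hu
    | @cons _ z _ h q => exact ⟨z, h⟩
  obtain ⟨b, hb⟩ := hnonempty
  have hbfw : b = f w := hsub hb
  have heq : T.neighborSet w = {f w} := by
    refine Set.Subset.antisymm hsub ?_
    rintro z rfl
    exact hbfw ▸ hb
  rw [heq, Set.ncard_singleton]

end Leafy

/-- If `G` is a connected graph of order `n > 3` with diameter at least `3`,
then `tmc(G) = m - n + 2 + l(G)`. -/
theorem stmt_11 {V : Type*} [Fintype V] (G : SimpleGraph V)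
    (hn : 3 < Fintype.card V) (hG : G.Connected) (hdiam : 3 ≤ G.diam) :
    (tmc G : ℤ) = (G.edgeSet.ncard : ℤ) - Fintype.card V + 2 + maxLeaves G := by
  classical
  have hne : Nonempty V := Fintype.card_pos_iff.mp (by omega)
  obtain ⟨x, y, hxyd⟩ := G.exists_dist_eq_diam
  have hxy : 3 ≤ G.dist x y := by rw [hxyd]; exact hdiam
  have hn4 : 4 ≤ Fintype.card V := by omega
  have hbddL : BddAbove {k | ∃ T : SimpleGraph V, T ≤ G ∧ T.IsTree ∧ leafCount T = k} := by
    refine ⟨Fintype.card V, ?_⟩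
    rintro k ⟨T', -, -, rfl⟩
    rw [leafCount]
    calc {v : V | (T'.neighborSet v).ncard = 1}.ncard
        ≤ (Set.univ : Set V).ncard := Set.ncard_le_ncard (Set.subset_univ _) (Set.toFinite _)
      _ = Fintype.card V := by rw [Set.ncard_univ, Nat.card_eq_fintype_card]
  -- upper bound for any TMC coloring
  have upper : ∀ vcol ecol, IsTMCColoring G vcol ecol →
      totalColorsUsed G vcol ecol + Fintype.card V ≤
        G.edgeSet.ncard + 2 + maxLeaves G := by
    intro vcol ecol h
    have hmc : IsMCColoring G ecol := by
      intro u v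
      obtain ⟨p, hp, c, hce, -⟩ := h u v
      exact ⟨p, hp, c, hce⟩
    have h1 := mc_upper hG hmc hxy
    set CE := ecol '' G.edgeSet with hCE
    set NF : Set V := {v | vcol v ∈ CE} with hNF
    have hNF1 : ∀ u v, u ∈ NF → v ∈ NF → ∃ p : G.Walk u v, ∀ w ∈ p.support, w ∈ NF := by
      intro u v hu hv
      obtain ⟨p, hp, c, hce, hcv⟩ := h u v
      refine ⟨p, fun w hw => ?_⟩
      by_cases hwu : w = u
      · exact hwu ▸ hu
      by_cases hwv : w = v
      · exact hwv ▸ hv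
      have hlen := two_le_length_of_internal p hw hwu hwv
      have hedge : ∃ e, e ∈ p.edges :=
        List.exists_mem_of_ne_nil _ (by
          rw [← List.length_pos_iff, p.length_edges]
          omega)
      obtain ⟨e, he⟩ := hedge
      show vcol w ∈ CE
      rw [hcv w hw hwu hwv, ← hce e he]
      exact Set.mem_image_of_mem _ (p.edges_subset_edgeSet he)
    have hNF2 : ∀ w, w ∉ NF → ∃ z, G.Adj w z ∧ z ∈ NF := by
      intro w _
      have hfar : ∃ u, 2 ≤ G.dist w u := by
        by_cases h2 : 2 ≤ G.dist w y
        · exact ⟨y, h2⟩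
        · refine ⟨x, ?_⟩
          have t1 := hG.dist_triangle (u := x) (v := w) (w := y)
          have hc2 : G.dist x w = G.dist w x := SimpleGraph.dist_comm
          have hc3 : G.dist w x = G.dist x w := SimpleGraph.dist_comm
          omega
      obtain ⟨u, hu⟩ := hfar
      obtain ⟨p, hp, c, hce, hcv⟩ := h w u
      have hlen : 2 ≤ p.length := le_trans hu (dist_le p)
      obtain ⟨z, hadj, hzu, hez, hzs⟩ := exists_second_vertex p hp hlen
      refine ⟨z, hadj, ?_⟩
      show vcol z ∈ CE
      rw [hcv z hzs hadj.ne' hzu, ← hce _ hez]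
      exact Set.mem_image_of_mem _ (p.edges_subset_edgeSet hez)
    obtain ⟨T, hTG, hTt, hTleaf⟩ := exists_leafy_tree hG (by omega) NF hNF1 hNF2
    have h2a : Set.range vcol \ CE ⊆ vcol '' {v : V | v ∉ NF} := by
      rintro cc ⟨⟨v, rfl⟩, hnotin⟩
      exact ⟨v, hnotin, rfl⟩
    have h2b : (Set.range vcol \ CE).ncard ≤ ({v : V | v ∉ NF}).ncard :=
      le_trans (Set.ncard_le_ncard h2a (Set.toFinite _)) (Set.ncard_image_le (Set.toFinite _))
    have h2d : ({v : V | v ∉ NF}).ncard ≤ leafCount T := by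
      rw [leafCount]
      exact Set.ncard_le_ncard (fun v hv => hTleaf v hv) (Set.toFinite _)
    have h2e : leafCount T ≤ maxLeaves G := le_csSup hbddL ⟨T, hTG, hTt, rfl⟩
    have h3 : totalColorsUsed G vcol ecol ≤ CE.ncard + (Set.range vcol \ CE).ncard := by
      rw [totalColorsUsed]
      have hun : Set.range vcol ∪ CE = CE ∪ (Set.range vcol \ CE) := by
        rw [Set.union_diff_self, Set.union_comm]
      rw [hun]
      exact Set.ncard_union_le _ _
    omega
  -- a spanning tree with maximum number of leaves
  have hSLne : {k | ∃ T : SimpleGraph V, T ≤ G ∧ T.IsTree ∧ leafCount T = k}.Nonempty := by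
    obtain ⟨T, hT1, hT2⟩ := exists_spanning_tree G hG
    exact ⟨leafCount T, T, hT1, hT2, rfl⟩
  obtain ⟨T, hTG, hTt, hTl⟩ := Nat.sSup_mem hSLne hbddL
  have hTl' : leafCount T = maxLeaves G := by rw [maxLeaves]; exact hTl
  letI : Fintype ↥(T.edgeSet) := (T.edgeSet.toFinite).fintype
  have hTE : T.edgeSet.ncard + 1 = Fintype.card V := by
    have hh := hTt.card_edgeFinset
    rw [Set.ncard_eq_toFinset_card']
    exact hh
  have hmn : T.edgeSet.ncard ≤ G.edgeSet.ncard :=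
    Set.ncard_le_ncard (edgeSet_mono hTG) (Set.toFinite _)
  obtain ⟨gE, hgE⟩ := Countable.exists_injective_nat (Sym2 V)
  obtain ⟨gV, hgV⟩ := Countable.exists_injective_nat V
  set ecol0 : Sym2 V → ℕ := fun e => if e ∈ T.edgeSet then 0 else 3 * gE e + 1 with hecol0
  set vcol0 : V → ℕ := fun v => if (T.neighborSet v).ncard = 1 then 3 * gV v + 2 else 0
    with hvcol0
  have hTMC : IsTMCColoring G vcol0 ecol0 := by
    intro u v
    obtain ⟨q1⟩ := hTt.isConnected.preconnected u v
    have hq0 : (q1.toPath : T.Walk u v).IsPath := q1.toPath.2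
    set q := (q1.toPath : T.Walk u v) with hqdef
    have hsub : ∀ e ∈ q.edges, e ∈ G.edgeSet := fun e he =>
      edgeSet_mono hTG (q.edges_subset_edgeSet he)
    refine ⟨q.transfer G hsub, hq0.transfer hsub, 0, ?_, ?_⟩
    · intro e he
      rw [Walk.edges_transfer] at he
      rw [hecol0]
      simp only
      rw [if_pos (q.edges_subset_edgeSet he)]
    · intro w hw hwu hwv
      rw [Walk.support_transfer] at hw
      obtain ⟨a, b2, hab, ha, hb2⟩ := internal_two_neighbors q hq0 hw hwu hwv
      have hne1 : (T.neighborSet w).ncard ≠ 1 := by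
        intro h1
        rw [Set.ncard_eq_one] at h1
        obtain ⟨z, hz⟩ := h1
        have ha' : a ∈ T.neighborSet w := ha
        have hb' : b2 ∈ T.neighborSet w := hb2
        rw [hz, Set.mem_singleton_iff] at ha' hb'
        exact hab (ha'.trans hb'.symm)
      rw [hvcol0]
      simp only
      rw [if_neg hne1]
  have hexE : ∃ e0, e0 ∈ T.edgeSet := by
    have hnt : Nontrivial V := Fintype.one_lt_card_iff_nontrivial.mp (by omega)
    obtain ⟨u0, v0, huv⟩ := exists_pair_ne V
    obtain ⟨p⟩ := hTt.isConnected.preconnected u0 v0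
    cases p with
    | nil => exact absurd rfl huv
    | @cons _ z _ h q => exact ⟨s(u0, z), h⟩
  have hexNL : ∃ v0 : V, (T.neighborSet v0).ncard ≠ 1 := by
    by_contra hcon
    push_neg at hcon
    have hsingle : ∀ z : V, ∀ a b : V, T.Adj z a → T.Adj z b → a = b := by
      intro z a b hza hzb
      have h1 := hcon z
      rw [Set.ncard_eq_one] at h1
      obtain ⟨zz, hzz⟩ := h1
      have m1 : a ∈ T.neighborSet z := hza
      have m2 : b ∈ T.neighborSet z := hzb
      rw [hzz, Set.mem_singleton_iff] at m1 m2
      exact m1.trans m2.symm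
    have hadjall : ∀ a b : V, a ≠ b → T.Adj a b := by
      intro a b hab
      obtain ⟨p0⟩ := hTt.isConnected.preconnected a b
      have hp : (p0.toPath : T.Walk a b).IsPath := p0.toPath.2
      set p := (p0.toPath : T.Walk a b) with hpdef
      by_cases h0 : p.length = 0
      · exact absurd (Walk.eq_of_length_eq_zero h0) hab
      by_cases hl1 : p.length = 1
      · exact Walk.adj_of_length_eq_one hl1
      · have hlen : 2 ≤ p.length := by omega
        obtain ⟨z, hz1, hz2, hz3, hz4⟩ := exists_second_vertex p hp hlen
        obtain ⟨c1, c2, hc12, hcz1, hcz2⟩ := internal_two_neighbors p hp hz4 hz1.ne' hz2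
        exact absurd (hsingle z c1 c2 hcz1 hcz2) hc12
    obtain ⟨a⟩ := hne
    have hnt : Nontrivial V := Fintype.one_lt_card_iff_nontrivial.mp (by omega)
    obtain ⟨b, hba⟩ := exists_ne a
    have h3 : (Finset.univ \ {a, b} : Finset V).Nonempty := by
      rw [← Finset.card_pos, Finset.card_sdiff_of_subset (Finset.subset_univ _), Finset.card_univ]
      have hle2 : ({a, b} : Finset V).card ≤ 2 :=
        le_trans (Finset.card_insert_le _ _) (by simp)
      omega
    obtain ⟨c, hc⟩ := h3
    rw [Finset.mem_sdiff] at hc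
    have hca : c ≠ a := by intro h; apply hc.2; simp [h]
    have hcb : c ≠ b := by intro h; apply hc.2; simp [h]
    have hab' : T.Adj a b := hadjall a b hba.symm
    have hac' : T.Adj a c := hadjall a c hca.symm
    exact hcb ((hsingle a c b hac' hab').symm ▸ rfl)
  -- compute colors of the constructed coloring
  have injV : Function.Injective (fun v : V => 3 * gV v + 2) := by
    intro a b hab
    simp only at hab
    exact hgV (by omega)
  have injE : Function.Injective (fun e : Sym2 V => 3 * gE e + 1) := by
    intro a b hab
    simp only at hab
    exact hgE (by omega)
  have hU : Set.range vcol0 ∪ ecol0 '' G.edgeSet =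
      ({0} ∪ (fun v => 3 * gV v + 2) '' {v : V | (T.neighborSet v).ncard = 1}) ∪
        (fun e => 3 * gE e + 1) '' (G.edgeSet \ T.edgeSet) := by
    ext cc
    constructor
    · rintro (⟨v, rfl⟩ | ⟨e, he, rfl⟩)
      · by_cases hv : (T.neighborSet v).ncard = 1
        · refine Or.inl (Or.inr ⟨v, hv, ?_⟩)
          rw [hvcol0]
          simp only
          rw [if_pos hv]
        · refine Or.inl (Or.inl ?_)
          have : vcol0 v = 0 := by rw [hvcol0]; simp only; rw [if_neg hv]
          rw [this]
          rfl
      · by_cases he2 : e ∈ T.edgeSet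
        · refine Or.inl (Or.inl ?_)
          have : ecol0 e = 0 := by rw [hecol0]; simp only; rw [if_pos he2]
          rw [this]
          rfl
        · refine Or.inr ⟨e, ⟨he, he2⟩, ?_⟩
          rw [hecol0]
          simp only
          rw [if_neg he2]
    · rintro ((hc0 | ⟨v, hv, rfl⟩) | ⟨e, ⟨heE, heT⟩, rfl⟩)
      · rw [Set.mem_singleton_iff] at hc0
        subst hc0
        obtain ⟨e0, he0⟩ := hexE
        refine Or.inr ⟨e0, edgeSet_mono hTG he0, ?_⟩
        rw [hecol0]
        simp only
        rw [if_pos he0]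
      · refine Or.inl ⟨v, ?_⟩
        rw [hvcol0]
        simp only
        rw [if_pos (show (T.neighborSet v).ncard = 1 from hv)]
      · refine Or.inr ⟨e, heE, ?_⟩
        rw [hecol0]
        simp only
        rw [if_neg heT]
  have hA2fin : ((fun v : V => 3 * gV v + 2) '' {v : V | (T.neighborSet v).ncard = 1}).Finite :=
    (Set.toFinite _).image _
  have hA1fin : ((fun e : Sym2 V => 3 * gE e + 1) '' (G.edgeSet \ T.edgeSet)).Finite :=
    (Set.toFinite _).image _
  have hd1 : Disjoint ({0} : Set ℕ)
      ((fun v : V => 3 * gV v + 2) '' {v : V | (T.neighborSet v).ncard = 1}) := by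
    rw [Set.disjoint_left]
    rintro a ha ⟨v, -, hv⟩
    rw [Set.mem_singleton_iff] at ha
    simp only at hv
    omega
  have hd2 : Disjoint
      (({0} : Set ℕ) ∪ (fun v : V => 3 * gV v + 2) '' {v : V | (T.neighborSet v).ncard = 1})
      ((fun e : Sym2 V => 3 * gE e + 1) '' (G.edgeSet \ T.edgeSet)) := by
    rw [Set.disjoint_left]
    rintro a ha ⟨e, -, he⟩
    simp only at he
    rcases ha with h | ⟨v, -, hv⟩
    · rw [Set.mem_singleton_iff] at h
      omega
    · simp only at hv
      omega
  have hcount : totalColorsUsed G vcol0 ecol0 =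
      1 + leafCount T + (G.edgeSet.ncard - T.edgeSet.ncard) := by
    rw [totalColorsUsed, hU]
    rw [Set.ncard_union_eq hd2 ((Set.finite_singleton 0).union hA2fin) hA1fin]
    rw [Set.ncard_union_eq hd1 (Set.finite_singleton 0) hA2fin]
    rw [Set.ncard_singleton]
    congr 1
    · congr 1
      rw [leafCount, Set.ncard_image_of_injective _ injV]
    · rw [Set.ncard_image_of_injective _ injE,
        Set.ncard_diff (edgeSet_mono hTG) (Set.toFinite _)]
  have hKmem : 1 + leafCount T + (G.edgeSet.ncard - T.edgeSet.ncard) ∈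
      {k | ∃ vcol ecol, IsTMCColoring G vcol ecol ∧ totalColorsUsed G vcol ecol = k} :=
    ⟨vcol0, ecol0, hTMC, hcount⟩
  have hub : ∀ k ∈ {k | ∃ vcol ecol, IsTMCColoring G vcol ecol ∧
      totalColorsUsed G vcol ecol = k},
      k ≤ 1 + leafCount T + (G.edgeSet.ncard - T.edgeSet.ncard) := by
    rintro k ⟨vc, ec, htm, rfl⟩
    have hup := upper vc ec htm
    rw [← hTl'] at hup
    omega
  have htmc : tmc G = 1 + leafCount T + (G.edgeSet.ncard - T.edgeSet.ncard) := by
    rw [tmc]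
    exact le_antisymm (csSup_le ⟨_, hKmem⟩ hub) (le_csSup ⟨_, hub⟩ hKmem)
  rw [htmc, ← hTl']
  omega
end

section
/- Let G be a connected graph. Then tmc(G) ≤ mc(G) + mvc(G), and equality holds if and only if G is a complete graph. -/
open SimpleGraph

section Aux
variable {V : Type*} [Fintype V] {G : SimpleGraph V}

lemma range_ncard_le (vcol : V → ℕ) : (Set.range vcol).ncard ≤ Fintype.card V := by
  rw [← Set.image_univ]
  calc (vcol '' Set.univ).ncard ≤ (Set.univ : Set V).ncard := Set.ncard_image_le
    _ = Fintype.card V := by rw [Set.ncard_univ, Nat.card_eq_fintype_card]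

lemma tmc_bdd (G : SimpleGraph V) :
    BddAbove {k | ∃ vcol ecol, IsTMCColoring G vcol ecol ∧ totalColorsUsed G vcol ecol = k} := by
  refine ⟨Fintype.card V + G.edgeSet.ncard, ?_⟩
  rintro k ⟨vcol, ecol, -, rfl⟩
  calc totalColorsUsed G vcol ecol ≤ (Set.range vcol).ncard + (ecol '' G.edgeSet).ncard :=
        Set.ncard_union_le _ _
    _ ≤ Fintype.card V + G.edgeSet.ncard :=
        Nat.add_le_add (range_ncard_le vcol) Set.ncard_image_le

lemma mc_bdd (G : SimpleGraph V) :
    BddAbove {k | ∃ ecol : Sym2 V → ℕ, IsMCColoring G ecol ∧ (ecol '' G.edgeSet).ncard = k} := by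
  refine ⟨G.edgeSet.ncard, ?_⟩
  rintro k ⟨ecol, -, rfl⟩
  exact Set.ncard_image_le

lemma mvc_bdd (G : SimpleGraph V) :
    BddAbove {k | ∃ vcol : V → ℕ, IsMVCColoring G vcol ∧ (Set.range vcol).ncard = k} := by
  refine ⟨Fintype.card V, ?_⟩
  rintro k ⟨vcol, -, rfl⟩
  exact range_ncard_le vcol

omit [Fintype V] in
lemma const_tmc (hG : G.Connected) : IsTMCColoring G (fun _ => 0) (fun _ => 0) := by
  classical
  intro u v
  obtain ⟨p⟩ := hG.preconnected u v
  exact ⟨p.toPath.1, p.toPath.2, 0, fun e _ => rfl, fun w _ _ _ => rfl⟩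

lemma tmc_nonempty (hG : G.Connected) :
    {k | ∃ vcol ecol, IsTMCColoring G vcol ecol ∧ totalColorsUsed G vcol ecol = k}.Nonempty :=
  ⟨_, _, _, const_tmc hG, rfl⟩

omit [Fintype V] in
lemma tmc_to_mvc {vcol ecol} (h : IsTMCColoring G vcol ecol) : IsMVCColoring G vcol := by
  intro u v
  obtain ⟨p, hp, c, -, hv⟩ := h u v
  exact ⟨p, hp, c, hv⟩

omit [Fintype V] in
lemma tmc_to_mc {vcol ecol} (h : IsTMCColoring G vcol ecol) : IsMCColoring G ecol := by
  intro u v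
  obtain ⟨p, hp, c, he, -⟩ := h u v
  exact ⟨p, hp, c, he⟩

lemma mvc_ge {vcol} (h : IsMVCColoring G vcol) : (Set.range vcol).ncard ≤ mvc G :=
  le_csSup (mvc_bdd G) ⟨vcol, h, rfl⟩

lemma mc_ge {ecol} (h : IsMCColoring G ecol) : (ecol '' G.edgeSet).ncard ≤ mc G :=
  le_csSup (mc_bdd G) ⟨ecol, h, rfl⟩

end Aux

/-- For a connected graph `G`, `tmc(G) ≤ mc(G) + mvc(G)`, with equality if and only
if `G` is a complete graph. -/
theorem stmt_17 {V : Type*} [Fintype V] (G : SimpleGraph V) (hG : G.Connected) :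
    tmc G ≤ mc G + mvc G ∧ (tmc G = mc G + mvc G ↔ G = ⊤) := by
  obtain ⟨vcol, ecol, htmc, heq⟩ :
      tmc G ∈ {k | ∃ vcol ecol, IsTMCColoring G vcol ecol ∧ totalColorsUsed G vcol ecol = k} :=
    Nat.sSup_mem (tmc_nonempty hG) (tmc_bdd G)
  have hA : (Set.range vcol).ncard ≤ mvc G := mvc_ge (tmc_to_mvc htmc)
  have hB : (ecol '' G.edgeSet).ncard ≤ mc G := mc_ge (tmc_to_mc htmc)
  have hle : tmc G ≤ mc G + mvc G := by
    rw [← heq]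
    calc totalColorsUsed G vcol ecol
        ≤ (Set.range vcol).ncard + (ecol '' G.edgeSet).ncard := Set.ncard_union_le _ _
      _ ≤ mvc G + mc G := Nat.add_le_add hA hB
      _ = mc G + mvc G := Nat.add_comm _ _
  refine ⟨hle, ?_, ?_⟩
  · -- equality → complete
    intro hEq
    by_contra hne
    -- get nonadjacent distinct pair
    obtain ⟨u, v, huv, hnadj⟩ : ∃ u v : V, u ≠ v ∧ ¬ G.Adj u v := by
      by_contra hc
      push_neg at hc
      apply hne
      ext a b
      simp only [top_adj]
      exact ⟨fun h => G.ne_of_adj h, fun h => hc a b h⟩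
    -- TMC path from u to v has an internal vertex
    obtain ⟨p, hp, c, hce, hcv⟩ := htmc u v
    obtain ⟨w, hwsup, hwu, hwv, hedge⟩ :
        ∃ w, w ∈ p.support ∧ w ≠ u ∧ w ≠ v ∧ s(u, w) ∈ p.edges := by
      cases p with
      | nil => exact absurd rfl huv
      | cons h q =>
        rename_i w
        have hwv : w ≠ v := by rintro rfl; exact hnadj h
        exact ⟨w, by simp [Walk.support_cons, q.start_mem_support], h.ne', hwv, by
          simp [Walk.edges_cons]⟩
    have hcA : c ∈ Set.range vcol := ⟨w, hcv w hwsup hwu hwv⟩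
    have hcB : c ∈ ecol '' G.edgeSet :=
      ⟨s(u, w), p.edges_subset_edgeSet hedge, hce _ hedge⟩
    -- strict bound
    have hstrict : tmc G < mc G + mvc G := by
      rw [← heq]
      have hsub : Set.range vcol ∪ ecol '' G.edgeSet
          ⊆ Set.range vcol ∪ (ecol '' G.edgeSet \ {c}) := by
        rintro x (hx | hx)
        · exact Or.inl hx
        · rcases eq_or_ne x c with rfl | hxc
          · exact Or.inl hcA
          · exact Or.inr ⟨hx, hxc⟩
      calc totalColorsUsed G vcol ecol
          ≤ (Set.range vcol ∪ (ecol '' G.edgeSet \ {c})).ncard :=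
            Set.ncard_le_ncard hsub (Set.toFinite _)
        _ ≤ (Set.range vcol).ncard + (ecol '' G.edgeSet \ {c}).ncard := Set.ncard_union_le _ _
        _ < (Set.range vcol).ncard + (ecol '' G.edgeSet).ncard :=
            Nat.add_lt_add_left (Set.ncard_diff_singleton_lt_of_mem hcB) _
        _ ≤ mvc G + mc G := Nat.add_le_add hA hB
        _ = mc G + mvc G := Nat.add_comm _ _
    omega
  · -- complete → equality
    rintro rfl
    -- injections into ℕ
    obtain ⟨f, hf⟩ := exists_injective_nat V
    obtain ⟨g, hg⟩ := exists_injective_nat (Sym2 V)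
    set vc : V → ℕ := fun x => 2 * f x with hvc
    set ec : Sym2 V → ℕ := fun e => 2 * g e + 1 with hec
    have hcol : IsTMCColoring (⊤ : SimpleGraph V) vc ec := by
      intro a b
      rcases eq_or_ne a b with rfl | hab
      · refine ⟨Walk.nil, Walk.IsPath.nil, 0, by simp, ?_⟩
        intro w hw hwa _
        simp only [Walk.support_nil, List.mem_singleton] at hw
        exact absurd hw hwa
      · have hadj : (⊤ : SimpleGraph V).Adj a b := by simpa using hab
        refine ⟨Walk.cons hadj Walk.nil, ?_, ec s(a, b), ?_, ?_⟩
        · simp [Walk.cons_isPath_iff, hab]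
        · intro e he
          simp only [Walk.edges_cons, Walk.edges_nil, List.mem_singleton] at he
          rw [he]
        · intro w hw hwa hwb
          simp only [Walk.support_cons, Walk.support_nil, List.mem_cons,
            List.mem_singleton, List.not_mem_nil, or_false] at hw
          rcases hw with rfl | rfl
          · exact absurd rfl hwa
          · exact absurd rfl hwb
    have hcount : totalColorsUsed (⊤ : SimpleGraph V) vc ec
        = Fintype.card V + (⊤ : SimpleGraph V).edgeSet.ncard := by
      unfold totalColorsUsed
      have hdisj : Disjoint (Set.range vc) (ec '' (⊤ : SimpleGraph V).edgeSet) := by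
        rw [Set.disjoint_left]
        rintro x ⟨a, rfl⟩ ⟨e, -, hx⟩
        simp only [hvc, hec] at hx
        omega
      rw [Set.ncard_union_eq hdisj]
      congr 1
      · rw [← Set.image_univ, Set.ncard_image_of_injective _ (fun a b h => hf (by simp only [hvc] at h; omega)),
          Set.ncard_univ, Nat.card_eq_fintype_card]
      · exact Set.ncard_image_of_injective _ (fun a b h => hg (by simp only [hec] at h; omega))
    have hge : Fintype.card V + (⊤ : SimpleGraph V).edgeSet.ncard ≤ tmc (⊤ : SimpleGraph V) :=
      le_csSup (tmc_bdd _) ⟨vc, ec, hcol, hcount⟩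
    have hmvc : mvc (⊤ : SimpleGraph V) ≤ Fintype.card V := by
      obtain ⟨w, hw, heq'⟩ :
          mvc (⊤ : SimpleGraph V) ∈ {k | ∃ vcol : V → ℕ, IsMVCColoring (⊤ : SimpleGraph V) vcol ∧
            (Set.range vcol).ncard = k} :=
        Nat.sSup_mem ⟨_, vc, tmc_to_mvc hcol, rfl⟩ (mvc_bdd _)
      rw [← heq']
      exact range_ncard_le w
    have hmc : mc (⊤ : SimpleGraph V) ≤ (⊤ : SimpleGraph V).edgeSet.ncard := by
      obtain ⟨w, hw, heq'⟩ :
          mc (⊤ : SimpleGraph V) ∈ {k | ∃ ecol : Sym2 V → ℕ, IsMCColoring (⊤ : SimpleGraph V) ecol ∧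
            (ecol '' (⊤ : SimpleGraph V).edgeSet).ncard = k} :=
        Nat.sSup_mem ⟨_, ec, tmc_to_mc hcol, rfl⟩ (mc_bdd _)
      rw [← heq']
      exact Set.ncard_image_le
    omega
end

section
/- Let G be a noncomplete connected graph. Then tmc(G) ≤ mc(G) + l(G). -/
open SimpleGraph

lemma exists_tree_le {V : Type*} [Fintype V] (G : SimpleGraph V) (hG : G.Connected) :
    ∃ T ≤ G, T.IsTree := by
  classical
  obtain ⟨n, hn⟩ : ∃ n, G.edgeSet.ncard = n := ⟨_, rfl⟩
  induction n using Nat.strong_induction_on generalizing G with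
  | _ n ih =>
  by_cases hac : G.IsAcyclic
  · exact ⟨G, le_rfl, ⟨hG, hac⟩⟩
  · rw [isAcyclic_iff_forall_adj_isBridge] at hac
    push_neg at hac
    obtain ⟨v, w, hadj, hnb⟩ := hac
    rw [isBridge_iff] at hnb
    have hreach : (G \ fromEdgeSet {s(v, w)}).Reachable v w := by
      by_contra h
      exact hnb h
    set G' := G \ fromEdgeSet {s(v, w)} with hG'
    have hle : G' ≤ G := sdiff_le
    have hstep : ∀ {a b : V}, G.Adj a b → G'.Reachable a b := by
      intro a b hab
      by_cases he : s(a, b) = s(v, w)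
      · rw [Sym2.eq_iff] at he
        rcases he with ⟨rfl, rfl⟩ | ⟨rfl, rfl⟩
        · exact hreach
        · exact hreach.symm
      · exact Adj.reachable (by
          rw [hG', sdiff_adj, fromEdgeSet_adj]
          exact ⟨hab, fun hc => he hc.1⟩)
    have hpre : G'.Preconnected := by
      intro x y
      obtain ⟨p⟩ := hG.preconnected x y
      induction p with
      | nil => exact Reachable.refl _
      | cons h q ihq => exact (hstep h).trans ihq
    have hconn' : G'.Connected := by haveI := hG.nonempty; exact ⟨hpre⟩
    have hedge : G'.edgeSet = G.edgeSet \ {s(v, w)} := by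
      rw [hG', edgeSet_sdiff, edgeSet_fromEdgeSet, edgeSet_sdiff_sdiff_isDiag]
    have hlt : G'.edgeSet.ncard < n := by
      rw [← hn, hedge]
      exact Set.ncard_diff_singleton_lt_of_mem hadj (Set.toFinite _)
    obtain ⟨T, hT, hTt⟩ := ih _ hlt G' hconn' rfl
    exact ⟨T, hT.trans hle, hTt⟩

/-- The auxiliary graph keeping only `A`–`A` edges and, for each `s ∉ A`, the edge to `f s`. -/
@[reducible]
def auxGraph {V : Type*} (G : SimpleGraph V) (A : Set V) (f : V → V) : SimpleGraph V where
  Adj x y := G.Adj x y ∧ ((x ∈ A ∧ y ∈ A) ∨ (x ∉ A ∧ y = f x) ∨ (y ∉ A ∧ x = f y))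
  symm := by
    refine ⟨?_⟩
    intro x y ⟨h, h2⟩
    exact ⟨h.symm, by tauto⟩
  loopless := ⟨fun x ⟨h, _⟩ => G.irrefl h⟩

lemma auxGraph_le {V : Type*} (G : SimpleGraph V) (A : Set V) (f : V → V) :
    auxGraph G A f ≤ G := fun _ _ h => h.1

/-- The key construction: a spanning tree in which every vertex outside `A` is a leaf. -/
lemma exists_tree_leaves {V : Type*} [Fintype V] (G : SimpleGraph V) (hG : G.Connected)
    (A : Set V) (hA : A.Nonempty)
    (hin : ∀ a ∈ A, ∀ b ∈ A, ∃ p : G.Walk a b, ∀ w ∈ p.support, w ∈ A)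
    (hout : ∀ s ∉ A, ∃ a ∈ A, G.Adj s a) :
    ∃ T ≤ G, T.IsTree ∧ ∀ s ∉ A, (T.neighborSet s).ncard = 1 := by
  classical
  have hf : ∀ s : V, ∃ a : V, s ∉ A → a ∈ A ∧ G.Adj s a := by
    intro s
    by_cases hs : s ∈ A
    · exact ⟨s, fun h => absurd hs h⟩
    · obtain ⟨a, ha, hadj⟩ := hout s hs
      exact ⟨a, fun _ => ⟨ha, hadj⟩⟩
  choose f hfp using hf
  set G1 := auxGraph G A f with hG1
  have hlift : ∀ {x y : V} (p : G.Walk x y), (∀ w ∈ p.support, w ∈ A) → G1.Reachable x y := by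
    intro x y p
    induction p with
    | nil => exact fun _ => Reachable.refl _
    | @cons u v w h q ihq =>
      intro hs
      have hu : u ∈ A := hs u (Walk.start_mem_support _)
      have hv : v ∈ A := hs v (by rw [Walk.support_cons]; exact List.mem_cons_of_mem _ q.start_mem_support)
      have h1 : G1.Adj u v := by rw [hG1]; exact ⟨h, Or.inl ⟨hu, hv⟩⟩
      exact h1.reachable.trans (ihq fun w hw => hs w (by rw [Walk.support_cons]; exact List.mem_cons_of_mem _ hw))
  have hrep : ∀ x : V, ∃ a ∈ A, G1.Reachable x a := by
    intro x
    by_cases hx : x ∈ A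
    · exact ⟨x, hx, Reachable.refl _⟩
    · refine ⟨f x, (hfp x hx).1, Adj.reachable ?_⟩
      rw [hG1]; exact ⟨(hfp x hx).2, Or.inr (Or.inl ⟨hx, rfl⟩)⟩
  have hpre : G1.Preconnected := by
    intro x y
    obtain ⟨a, ha, hxa⟩ := hrep x
    obtain ⟨b, hb, hyb⟩ := hrep y
    obtain ⟨p, hp⟩ := hin a ha b hb
    exact (hxa.trans (hlift p hp)).trans hyb.symm
  have hconn1 : G1.Connected := by haveI := hG.nonempty; exact ⟨hpre⟩
  obtain ⟨T, hT1, hTt⟩ := exists_tree_le G1 hconn1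
  refine ⟨T, hT1.trans (auxGraph_le G A f), hTt, ?_⟩
  intro s hs
  have hnbd : G1.neighborSet s = {f s} := by
    ext y
    simp only [mem_neighborSet, Set.mem_singleton_iff, hG1]
    constructor
    · rintro ⟨hadj, (⟨hsA, _⟩ | ⟨_, hy⟩ | ⟨hyA, hsy⟩)⟩
      · exact absurd hsA hs
      · exact hy
      · exact absurd (hsy ▸ (hfp y hyA).1) hs
    · rintro rfl
      exact ⟨(hfp s hs).2, Or.inr (Or.inl ⟨hs, rfl⟩)⟩
  have hsub : T.neighborSet s ⊆ {f s} := by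
    rw [← hnbd]
    exact fun y hy => hT1 hy
  obtain ⟨a, ha⟩ := hA
  have hne : s ≠ a := fun h => hs (h ▸ ha)
  obtain ⟨p⟩ := hTt.isConnected.preconnected s a
  have hnonempty : (T.neighborSet s).Nonempty := by
    cases p with
    | nil => exact absurd rfl hne
    | cons h q => exact ⟨_, h⟩
  have heq : T.neighborSet s = {f s} := by
    obtain ⟨y, hy⟩ := hnonempty
    have hyf : y = f s := hsub hy
    apply Set.Subset.antisymm hsub
    rintro z rfl
    exact hyf ▸ hy
  rw [heq]
  exact Set.ncard_singleton _

/-- For a noncomplete connected graph `G`, `tmc(G) ≤ mc(G) + l(G)`. -/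
theorem stmt_18 {V : Type*} [Fintype V] (G : SimpleGraph V) (hG : G.Connected)
    (hnc : G ≠ ⊤) : tmc G ≤ mc G + maxLeaves G := by
  classical
  apply csSup_le'
  rintro k ⟨vcol, ecol, hcol, rfl⟩
  set img := ecol '' G.edgeSet with himg
  have hmcb : img.ncard ≤ mc G := by
    apply le_csSup
    · refine ⟨G.edgeSet.ncard, ?_⟩
      rintro m ⟨e', _, rfl⟩
      exact Set.ncard_image_le (Set.toFinite _)
    · refine ⟨ecol, ?_, rfl⟩
      intro u v
      obtain ⟨p, hp, c, hce, _⟩ := hcol u v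
      exact ⟨p, hp, c, hce⟩
  set A := {v : V | vcol v ∈ img} with hA
  have fact1 : ∀ u v : V, ∃ p : G.Walk u v, p.IsPath ∧
      ∀ w ∈ p.support, w ≠ u → w ≠ v → w ∈ A := by
    intro u v
    obtain ⟨p, hp, c, hce, hcv⟩ := hcol u v
    refine ⟨p, hp, fun w hw hwu hwv => ?_⟩
    have hc : c ∈ img := by
      cases p with
      | nil =>
        rw [Walk.support_nil, List.mem_singleton] at hw
        exact absurd hw hwu
      | @cons _ x _ h q =>
        have hmem : s(u, x) ∈ (Walk.cons h q).edges := by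
          rw [Walk.edges_cons]; exact List.mem_cons_self
        exact ⟨s(u, x), (Walk.cons h q).edges_subset_edgeSet hmem, hce _ hmem⟩
    have : vcol w = c := hcv w hw hwu hwv
    simp only [hA, Set.mem_setOf_eq, this]
    exact hc
  rcases Set.eq_empty_or_nonempty A with hAe | hAne
  · exfalso
    apply hnc
    ext u v
    simp only [top_adj]
    constructor
    · exact Adj.ne
    · intro huv
      obtain ⟨p, hp, hint⟩ := fact1 u v
      cases p with
      | nil => exact absurd rfl huv
      | @cons _ x _ h q =>
        cases q with
        | nil => exact h
        | @cons _ y _ h' q' =>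
          exfalso
          have hxv : x ≠ v := by
            intro hxv
            subst hxv
            have h2 := hp.of_cons
            rw [Walk.isPath_iff_eq_nil] at h2
            simp at h2
          have hx : x ∈ A := hint x
            (by rw [Walk.support_cons]; exact List.mem_cons_of_mem _ (Walk.start_mem_support _))
            h.ne' hxv
          rw [hAe] at hx
          exact hx
  · have hin : ∀ a ∈ A, ∀ b ∈ A, ∃ p : G.Walk a b, ∀ w ∈ p.support, w ∈ A := by
      intro a ha b hb
      obtain ⟨p, hp, hint⟩ := fact1 a b
      refine ⟨p, fun w hw => ?_⟩
      by_cases h1 : w = a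
      · exact h1 ▸ ha
      by_cases h2 : w = b
      · exact h2 ▸ hb
      exact hint w hw h1 h2
    have hout : ∀ s ∉ A, ∃ a ∈ A, G.Adj s a := by
      intro s hs
      obtain ⟨a0, ha0⟩ := hAne
      obtain ⟨p, hp, hint⟩ := fact1 s a0
      cases p with
      | nil => exact absurd ha0 hs
      | @cons _ x _ h q =>
        by_cases hx : x = a0
        · exact ⟨a0, ha0, hx ▸ h⟩
        · exact ⟨x, hint x
            (by rw [Walk.support_cons]; exact List.mem_cons_of_mem _ (Walk.start_mem_support _))
            h.ne' hx, h⟩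
    obtain ⟨T, hTle, hTt, hTleaf⟩ := exists_tree_leaves G hG A hAne hin hout
    have hml : leafCount T ≤ maxLeaves G := by
      apply le_csSup
      · refine ⟨Nat.card V, ?_⟩
        rintro m ⟨T', _, _, rfl⟩
        rw [leafCount, ← Set.ncard_univ]
        exact Set.ncard_le_ncard (Set.subset_univ _) (Set.toFinite _)
      · exact ⟨T, hTle, hTt, rfl⟩
    have hEx : (Set.range vcol \ img).ncard ≤ leafCount T := by
      have hsub : Set.range vcol \ img ⊆ vcol '' {v : V | (T.neighborSet v).ncard = 1} := by
        rintro c ⟨⟨s, rfl⟩, hcimg⟩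
        have hsA : s ∉ A := fun h => hcimg h
        exact ⟨s, hTleaf s hsA, rfl⟩
      calc (Set.range vcol \ img).ncard
          ≤ (vcol '' {v : V | (T.neighborSet v).ncard = 1}).ncard :=
            Set.ncard_le_ncard hsub (Set.toFinite _)
        _ ≤ ({v : V | (T.neighborSet v).ncard = 1}).ncard := Set.ncard_image_le (Set.toFinite _)
        _ = leafCount T := rfl
    calc totalColorsUsed G vcol ecol = (Set.range vcol ∪ img).ncard := rfl
      _ = (img ∪ (Set.range vcol \ img)).ncard := by rw [Set.union_diff_self, Set.union_comm]
      _ ≤ img.ncard + (Set.range vcol \ img).ncard := Set.ncard_union_le _ _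
      _ ≤ mc G + maxLeaves G := Nat.add_le_add hmcb (hEx.trans hml)
end
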